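/- arXiv:1308.2992 — 3 statements merged into one kernel-verified Lean document; each statement's English description precedes it below -/
import Mathlib

section
/- For all $k,\ell\in\{1,\dots,m\}$ one has $\Phi_\mathbf{i}\big(\varphi'_\mathbf{i}(\varepsilon_k),\ \varphi'_\mathbf{i}(\varepsilon_\ell)\big)=(\omega_{i_k}-w_k\omega_{i_k},\ w_\ell\omega_{i_\ell})$ if $k<\ell$, and $=(w_\ell\omega_{i_\ell}-\omega_{i_\ell},\ \omega_{i_k})$ if $k\ge\ell$. -/
open Finset

/-- The weight lattice `𝒫`: the free abelian group with basis `{αᵢ, ωᵢ : i ∈ I}`,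
represented by pairs of coefficient vectors (first component: coefficients of the `αᵢ`,
second component: coefficients of the `ωᵢ`). -/
abbrev PLat (n : ℕ) := (Fin n → ℤ) × (Fin n → ℤ)

/-- The coroot lattice `𝒬^∨`: the free abelian group with basis `{αᵢ^∨ : i ∈ I}`,
represented by coefficient vectors. -/
abbrev QvLat (n : ℕ) := Fin n → ℤ

variable {n : ℕ}

/-- The basis element `α_j^∨` of `𝒬^∨`. -/
def coroot (j : Fin n) : QvLat n := fun k => if k = j then 1 else 0

/-- The basis element `α_j` of `𝒫`. -/
def alP (j : Fin n) : PLat n := (fun k => if k = j then 1 else 0, 0)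

/-- The basis element `ω_j` of `𝒫`. -/
def omP (j : Fin n) : PLat n := (0, fun k => if k = j then 1 else 0)

/-- The biadditive pairing `𝒬^∨ × 𝒫 → ℤ` with `(αᵢ^∨, α_j) = a_{ij}` and
`(αᵢ^∨, ω_j) = δ_{ij}`. -/
def pairQP (A : Fin n → Fin n → ℤ) (x : QvLat n) (lam : PLat n) : ℤ :=
  (∑ a, ∑ b, x a * A a b * lam.1 b) + ∑ a, x a * lam.2 a

/-- The simple reflection `sᵢ` on `𝒫`: `sᵢ α_j = α_j - a_{ij} αᵢ`,
`sᵢ ω_j = ω_j - δ_{ij} αᵢ`. -/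
def sP (A : Fin n → Fin n → ℤ) (a : Fin n) (lam : PLat n) : PLat n :=
  (fun j => if j = a then lam.1 a - ((∑ k, A a k * lam.1 k) + lam.2 a) else lam.1 j,
   lam.2)

/-- The simple reflection `sᵢ^∨` on `𝒬^∨`: `sᵢ^∨ α_j^∨ = α_j^∨ - a_{ji} αᵢ^∨`. -/
def sQ (A : Fin n → Fin n → ℤ) (a : Fin n) (x : QvLat n) : QvLat n :=
  fun j => if j = a then x a - ∑ k, A k a * x k else x j

/-- `w_ℓ = s_{i₁} ∘ ⋯ ∘ s_{i_ℓ}` on `𝒫` (with `w₀ = id`). -/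
def wP (A : Fin n → Fin n → ℤ) (ii : ℕ → Fin n) : ℕ → PLat n → PLat n
  | 0 => id
  | (l+1) => wP A ii l ∘ sP A (ii (l+1))

/-- `w_ℓ^∨ = s_{i₁}^∨ ∘ ⋯ ∘ s_{i_ℓ}^∨` on `𝒬^∨` (with `w₀ = id`). -/
def wQ (A : Fin n → Fin n → ℤ) (ii : ℕ → Fin n) : ℕ → QvLat n → QvLat n
  | 0 => id
  | (l+1) => wQ A ii l ∘ sQ A (ii (l+1))

/-- `k⁺ = min({ℓ : k < ℓ ≤ m, i_ℓ = i_k} ∪ {m+1})`. -/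
noncomputable def kplus (ii : ℕ → Fin n) (m k : ℕ) : ℕ :=
  sInf ({l | k < l ∧ l ≤ m ∧ ii l = ii k} ∪ {m+1})

/-- `k⁻ = max({ℓ : 1 ≤ ℓ < k, i_ℓ = i_k} ∪ {0})`. -/
noncomputable def kminus (ii : ℕ → Fin n) (k : ℕ) : ℕ :=
  sSup ({l | 1 ≤ l ∧ l < k ∧ ii l = ii k} ∪ {0})

/-- The standard basis vector `ε_k` of `ℤ^m` (1-based index), with the convention
`ε_s = 0` for `s ∉ {1,…,m}`. -/
def eps (m k : ℕ) : Fin m → ℤ := fun j => if (j : ℕ) + 1 = k then 1 else 0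

/-- `φ_𝐢(ε_k) = -ε_k - ε_{k⁻} - ∑_{ℓ : ℓ < k < ℓ⁺} a_{i_ℓ i_k} ε_ℓ`. -/
noncomputable def phiE (A : Fin n → Fin n → ℤ) (ii : ℕ → Fin n) (m k : ℕ) :
    Fin m → ℤ :=
  -(eps m k) - eps m (kminus ii k)
    - ∑ l : Fin m, (if (l:ℕ)+1 < k ∧ k < kplus ii m ((l:ℕ)+1)
        then A (ii ((l:ℕ)+1)) (ii k) else 0) • eps m ((l:ℕ)+1)

/-- The endomorphism `φ_𝐢` of `ℤ^m`, extended additively from its values on the basis. -/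
noncomputable def phiMap (A : Fin n → Fin n → ℤ) (ii : ℕ → Fin n) (m : ℕ)
    (v : Fin m → ℤ) : Fin m → ℤ :=
  ∑ k : Fin m, v k • phiE A ii m ((k:ℕ)+1)

/-- `φ'_𝐢(ε_ℓ) = -∑_{k=1}^{ℓ} (w_k^∨ α_{i_k}^∨, w_ℓ ω_{i_ℓ}) ε_k`. -/
def phiE' (A : Fin n → Fin n → ℤ) (ii : ℕ → Fin n) (m l : ℕ) : Fin m → ℤ :=
  -∑ k : Fin m, (if (k:ℕ)+1 ≤ l then
      pairQP A (wQ A ii ((k:ℕ)+1) (coroot (ii ((k:ℕ)+1)))) (wP A ii l (omP (ii l)))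
    else 0) • eps m ((k:ℕ)+1)

/-- The endomorphism `φ'_𝐢` of `ℤ^m`, extended additively from its values on the basis. -/
def phiMap' (A : Fin n → Fin n → ℤ) (ii : ℕ → Fin n) (m : ℕ)
    (v : Fin m → ℤ) : Fin m → ℤ :=
  ∑ l : Fin m, v l • phiE' A ii m ((l:ℕ)+1)

/-- `∂_𝐢 ε_k = ε_k - ε_{k⁻}`. -/
noncomputable def derE (ii : ℕ → Fin n) (m k : ℕ) : Fin m → ℤ :=
  eps m k - eps m (kminus ii k)

/-- The endomorphism `∂_𝐢` of `ℤ^m`. -/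
noncomputable def derMap (ii : ℕ → Fin n) (m : ℕ) (v : Fin m → ℤ) : Fin m → ℤ :=
  ∑ k : Fin m, v k • derE ii m ((k:ℕ)+1)

/-- `∫_𝐢 ε_k = ε_k + ε_{k⁻} + ε_{(k⁻)⁻} + ⋯` (summing along the chain `k > k⁻ > ⋯ > 0`). -/
noncomputable def intE (ii : ℕ → Fin n) (m : ℕ) (k : ℕ) : Fin m → ℤ :=
  if h : kminus ii k < k then eps m k + intE ii m (kminus ii k) else eps m k
termination_by k
decreasing_by exact h

/-- The endomorphism `∫_𝐢` of `ℤ^m`. -/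
noncomputable def intMap (ii : ℕ → Fin n) (m : ℕ) (v : Fin m → ℤ) : Fin m → ℤ :=
  ∑ k : Fin m, v k • intE ii m ((k:ℕ)+1)

/-- The skew-symmetric biadditive form `Λ_𝐢` on `ℤ^m` with
`Λ_𝐢(ε_k, ε_ℓ) = sgn(k-ℓ) c_{i_k i_ℓ}` where `c_{ij} = dᵢ a_{ij}`. -/
def LamF (A : Fin n → Fin n → ℤ) (d : Fin n → ℤ) (ii : ℕ → Fin n) (m : ℕ)
    (a b : Fin m → ℤ) : ℤ :=
  ∑ k : Fin m, ∑ l : Fin m, a k * b l *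
    ((((k:ℕ):ℤ) - ((l:ℕ):ℤ)).sign *
      (d (ii ((k:ℕ)+1)) * A (ii ((k:ℕ)+1)) (ii ((l:ℕ)+1))))

/-- The biadditive form `Φ_𝐢` on `ℤ^m` with `Φ_𝐢(ε_k,ε_ℓ) = -d_{i_k}` if `k = ℓ`,
`= -c_{i_ℓ i_k}` if `ℓ < k`, and `= 0` if `ℓ > k`. -/
def PhiF (A : Fin n → Fin n → ℤ) (d : Fin n → ℤ) (ii : ℕ → Fin n) (m : ℕ)
    (a b : Fin m → ℤ) : ℤ :=
  ∑ k : Fin m, ∑ l : Fin m, a k * b l *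
    (if (k:ℕ) = (l:ℕ) then -(d (ii ((k:ℕ)+1)))
     else if (l:ℕ) < (k:ℕ) then
       -(d (ii ((l:ℕ)+1)) * A (ii ((l:ℕ)+1)) (ii ((k:ℕ)+1)))
     else 0)

/-- The entry `b_{pk}` of the exchange matrix `B̃_𝐢`. -/
noncomputable def bcoef (A : Fin n → Fin n → ℤ) (ii : ℕ → Fin n) (m p k : ℕ) : ℤ :=
  if p = kminus ii k then -1
  else if p < k ∧ k < kplus ii m p ∧ kplus ii m p < kplus ii m k then
    -(A (ii p) (ii k))
  else if k < p ∧ p < kplus ii m k ∧ kplus ii m k < kplus ii m p then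
    A (ii p) (ii k)
  else if p = kplus ii m k then 1
  else 0

/-- The column `𝐛^k = ∑_p b_{pk} ε_p ∈ ℤ^m` of the exchange matrix. -/
noncomputable def bvec (A : Fin n → Fin n → ℤ) (ii : ℕ → Fin n) (m k : ℕ) :
    Fin m → ℤ :=
  fun p => bcoef A ii m ((p:ℕ)+1) k

/-- `ρ_𝐢⁺(ε_k) = ε_k + ∑_{ℓ<k, ℓ⁺=m+1} a_{i_ℓ i_k} ε_ℓ`. -/
noncomputable def rhoPE (A : Fin n → Fin n → ℤ) (ii : ℕ → Fin n) (m k : ℕ) :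
    Fin m → ℤ :=
  eps m k + ∑ l : Fin m, (if (l:ℕ)+1 < k ∧ kplus ii m ((l:ℕ)+1) = m+1
      then A (ii ((l:ℕ)+1)) (ii k) else 0) • eps m ((l:ℕ)+1)

/-- `ρ_𝐢⁻(ε_k) = ε_k - ∑_{ℓ≤k, ℓ⁺=m+1} a_{i_ℓ i_k} ε_ℓ`. -/
noncomputable def rhoME (A : Fin n → Fin n → ℤ) (ii : ℕ → Fin n) (m k : ℕ) :
    Fin m → ℤ :=
  eps m k - ∑ l : Fin m, (if (l:ℕ)+1 ≤ k ∧ kplus ii m ((l:ℕ)+1) = m+1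
      then A (ii ((l:ℕ)+1)) (ii k) else 0) • eps m ((l:ℕ)+1)

/-- The endomorphism `ρ_𝐢⁺` of `ℤ^m`. -/
noncomputable def rhoPMap (A : Fin n → Fin n → ℤ) (ii : ℕ → Fin n) (m : ℕ)
    (v : Fin m → ℤ) : Fin m → ℤ :=
  ∑ k : Fin m, v k • rhoPE A ii m ((k:ℕ)+1)

/-- The endomorphism `ρ_𝐢⁻` of `ℤ^m`. -/
noncomputable def rhoMMap (A : Fin n → Fin n → ℤ) (ii : ℕ → Fin n) (m : ℕ)
    (v : Fin m → ℤ) : Fin m → ℤ :=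
  ∑ k : Fin m, v k • rhoME A ii m ((k:ℕ)+1)

/-- `𝐚_λ = -∑_{k=1}^m (w_k^∨ α_{i_k}^∨, w_m λ) ε_k ∈ ℤ^m`. -/
def avec (A : Fin n → Fin n → ℤ) (ii : ℕ → Fin n) (m : ℕ) (lam : PLat n) :
    Fin m → ℤ :=
  fun k => -(pairQP A (wQ A ii ((k:ℕ)+1) (coroot (ii ((k:ℕ)+1)))) (wP A ii m lam))

/-- `|𝐚| = ∑_{k=1}^m a_k α_{i_k} ∈ 𝒬 ⊆ 𝒫`. -/
def degP (ii : ℕ → Fin n) (m : ℕ) (a : Fin m → ℤ) : PLat n :=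
  (fun j => ∑ k : Fin m, if ii ((k:ℕ)+1) = j then a k else 0, 0)

/-- The pairing `(μ, λ) = ∑ mᵢ dᵢ (αᵢ^∨, λ)` for `μ = ∑ mᵢ αᵢ ∈ 𝒬` and `λ ∈ 𝒫`
(induced by identifying `αᵢ` with `dᵢ αᵢ^∨`). -/
def pairAl (A : Fin n → Fin n → ℤ) (d : Fin n → ℤ) (mu lam : PLat n) : ℤ :=
  ∑ j, mu.1 j * (d j * pairQP A (coroot j) lam)

section Aux

variable (A : Fin n → Fin n → ℤ) (d : Fin n → ℤ) (ii : ℕ → Fin n)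

/-- `uW a b λ = s_{i_{a+1}} ⋯ s_{i_b} λ` (identity when `b ≤ a`). -/
def uW (a : ℕ) : ℕ → PLat n → PLat n
  | 0 => id
  | (b+1) => if b+1 ≤ a then id else uW a b ∘ sP A (ii (b+1))

/-- `rW t λ = s_{i_t} ⋯ s_{i_1} λ`. -/
def rW : ℕ → PLat n → PLat n
  | 0 => id
  | (t+1) => sP A (ii (t+1)) ∘ rW t

/-- symmetric invariant bilinear form -/
def BB (lam mu : PLat n) : ℤ :=
  (∑ j, ∑ b, lam.1 j * (d j * A j b) * mu.1 b) + (∑ j, lam.1 j * (d j * mu.2 j))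
    + (∑ j, lam.2 j * (d j * mu.1 j))

lemma pair_coroot (j : Fin n) (lam : PLat n) :
    pairQP A (coroot j) lam = (∑ b, A j b * lam.1 b) + lam.2 j := by
  simp [pairQP, coroot, ite_mul, Finset.sum_ite_eq]

lemma wP_snd (l : ℕ) (lam : PLat n) : (wP A ii l lam).2 = lam.2 := by
  induction l generalizing lam with
  | zero => rfl
  | succ b ihb => exact ihb (sP A (ii (b+1)) lam)

lemma sum_ite_row (c a : Fin n) (v : Fin n → ℤ) (x : ℤ) :
    (∑ kk, A c kk * (if kk = a then v a - x else v kk))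
      = (∑ kk, A c kk * v kk) - A c a * x := by
  have h : ∀ kk, A c kk * (if kk = a then v a - x else v kk)
      = A c kk * v kk - (if kk = a then A c a * x else 0) := by
    intro kk; by_cases h : kk = a
    · subst h; simp; ring
    · simp [h]
  rw [Finset.sum_congr rfl fun kk _ => h kk, Finset.sum_sub_distrib,
    Finset.sum_ite_eq' Finset.univ a]
  simp

lemma sum_ite_pivot (a : Fin n) (v f : Fin n → ℤ) (e : ℤ) :
    (∑ c, (if c = a then e else v c) * f c)
      = (∑ c, v c * f c) + (e - v a) * f a := by
  have h : ∀ c, (if c = a then e else v c) * f c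
      = v c * f c + (if c = a then (e - v a) * f a else 0) := by
    intro c; by_cases h : c = a
    · subst h; simp; ring
    · simp [h]
  rw [Finset.sum_congr rfl fun c _ => h c, Finset.sum_add_distrib,
    Finset.sum_ite_eq' Finset.univ a]
  simp

lemma sP_invol (hA : ∀ i, A i i = 2) (a : Fin n) (lam : PLat n) :
    sP A a (sP A a lam) = lam := by
  have key := sum_ite_row A a a lam.1 ((∑ kk, A a kk * lam.1 kk) + lam.2 a)
  refine Prod.ext ?_ rfl
  funext j
  by_cases h : j = a
  · subst h
    show (if j = j then _ else _) = lam.1 j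
    rw [if_pos rfl]
    show (if j = j then _ else _) - _ = lam.1 j
    rw [if_pos rfl]
    show lam.1 j - _ - ((∑ kk, A j kk * (if kk = j then lam.1 j - _ else lam.1 kk)) + lam.2 j) = lam.1 j
    rw [key, hA]
    ring
  · show (if j = a then _ else _) = lam.1 j
    rw [if_neg h]
    show (if j = a then _ else _) = lam.1 j
    rw [if_neg h]

lemma sP_eq_sub (a : Fin n) (lam : PLat n) :
    sP A a lam = lam - (pairQP A (coroot a) lam) • alP a := by
  rw [pair_coroot]
  refine Prod.ext ?_ ?_
  · funext j
    by_cases h : j = a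
    · subst h; simp [sP, alP]
    · simp [sP, alP, h]
  · funext j
    simp [sP, alP]

lemma pair_sQ_sP (a : Fin n) (v : QvLat n) (lam : PLat n) :
    pairQP A (sQ A a v) lam = pairQP A v (sP A a lam) := by
  show (∑ c, ∑ b, (if c = a then v a - ∑ kk, A kk a * v kk else v c) * A c b * lam.1 b)
      + (∑ c, (if c = a then v a - ∑ kk, A kk a * v kk else v c) * lam.2 c)
    = (∑ c, ∑ b, v c * A c b *
        (if b = a then lam.1 a - ((∑ kk, A a kk * lam.1 kk) + lam.2 a) else lam.1 b))
      + (∑ c, v c * lam.2 c)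
  set T : ℤ := ∑ kk, A kk a * v kk with hT
  set X : ℤ := (∑ kk, A a kk * lam.1 kk) + lam.2 a with hX
  have hL : ∀ c : Fin n, (∑ b, (if c = a then v a - T else v c) * A c b * lam.1 b)
      = (if c = a then v a - T else v c) * (∑ b, A c b * lam.1 b) := by
    intro c; rw [Finset.mul_sum]; exact Finset.sum_congr rfl fun b _ => by ring
  have hR : ∀ c : Fin n, (∑ b, v c * A c b *
        (if b = a then lam.1 a - X else lam.1 b))
      = v c * ((∑ b, A c b * lam.1 b) - A c a * X) := by
    intro c
    rw [← sum_ite_row A c a lam.1 X, Finset.mul_sum]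
    exact Finset.sum_congr rfl fun b _ => by ring
  rw [Finset.sum_congr rfl fun c _ => hL c, Finset.sum_congr rfl fun c _ => hR c,
    sum_ite_pivot a v (fun c => ∑ b, A c b * lam.1 b) (v a - T),
    sum_ite_pivot a v lam.2 (v a - T)]
  have hsplit : (∑ c, v c * ((∑ b, A c b * lam.1 b) - A c a * X))
      = (∑ c, v c * (∑ b, A c b * lam.1 b)) - (∑ c, A c a * v c) * X := by
    rw [Finset.sum_mul, ← Finset.sum_sub_distrib]
    exact Finset.sum_congr rfl fun c _ => by ring
  rw [hsplit]
  ring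

lemma pair_wQ_rW (t : ℕ) (v : QvLat n) (lam : PLat n) :
    pairQP A (wQ A ii t v) lam = pairQP A v (rW A ii t lam) := by
  induction t generalizing v with
  | zero => rfl
  | succ b ih =>
    show pairQP A (wQ A ii b (sQ A (ii (b+1)) v)) lam = _
    rw [ih, pair_sQ_sP]
    rfl

lemma uW_self (a : ℕ) : uW A ii a a = id := by
  cases a with
  | zero => rfl
  | succ b => show (if b+1 ≤ b+1 then _ else _) = id; rw [if_pos le_rfl]

lemma uW_le {a b : ℕ} (h : b ≤ a) : uW A ii a b = id := by
  cases b with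
  | zero => rfl
  | succ c => show (if c+1 ≤ a then _ else _) = id; rw [if_pos h]

lemma uW_succ {a b : ℕ} (h : a ≤ b) (lam : PLat n) :
    uW A ii a (b+1) lam = uW A ii a b (sP A (ii (b+1)) lam) := by
  have h2 : uW A ii a (b+1) = uW A ii a b ∘ sP A (ii (b+1)) := by
    show (if b+1 ≤ a then _ else _) = _
    rw [if_neg (by omega)]
  rw [h2]
  rfl

lemma uW_cons (hA : ∀ i, A i i = 2) : ∀ {a b : ℕ}, a < b → ∀ (lam : PLat n),
    uW A ii a b lam = sP A (ii (a+1)) (uW A ii (a+1) b lam) := by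
  intro a b
  induction b with
  | zero => omega
  | succ c ih =>
    intro h lam
    rcases Nat.lt_or_ge a c with hc | hc
    · rw [uW_succ A ii (by omega), uW_succ A ii (by omega), ih hc]
    · have hac : a = c := by omega
      subst hac
      rw [uW_succ A ii le_rfl, uW_self, uW_le A ii le_rfl]
      rfl

lemma wP_eq_uW : ∀ (l : ℕ) (lam : PLat n), wP A ii l lam = uW A ii 0 l lam := by
  intro l
  induction l with
  | zero => intro lam; rfl
  | succ b ih =>
    intro lam
    show wP A ii b (sP A (ii (b+1)) lam) = _
    rw [ih, uW_succ A ii (Nat.zero_le b)]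

lemma rW_uW (hA : ∀ i, A i i = 2) : ∀ {s l : ℕ}, s ≤ l → ∀ (lam : PLat n),
    rW A ii s (uW A ii 0 l lam) = uW A ii s l lam := by
  intro s
  induction s with
  | zero => intro l _ lam; rfl
  | succ c ih =>
    intro l h lam
    show sP A (ii (c+1)) (rW A ii c (uW A ii 0 l lam)) = _
    rw [ih (by omega), uW_cons A ii hA (show c < l by omega), sP_invol A hA]

lemma wP_split : ∀ {l k : ℕ}, l ≤ k → ∀ (lam : PLat n),
    wP A ii k lam = wP A ii l (uW A ii l k lam) := by
  intro l k
  induction k with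
  | zero =>
    intro h lam
    have : l = 0 := by omega
    subst this; rfl
  | succ c ih =>
    intro h lam
    rcases Nat.lt_or_ge l (c+1) with hc | hc
    · show wP A ii c (sP A (ii (c+1)) lam) = _
      rw [ih (by omega), uW_succ A ii (by omega)]
    · have : l = c+1 := by omega
      subst this
      rw [uW_self]
      rfl

lemma BB_symm (hsym : ∀ i j, d i * A i j = d j * A j i) (lam mu : PLat n) :
    BB A d lam mu = BB A d mu lam := by
  unfold BB
  rw [Finset.sum_comm]
  have h1 : ∀ j b : Fin n, lam.1 b * (d b * A b j) * mu.1 j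
      = mu.1 j * (d j * A j b) * lam.1 b := by
    intro j b; rw [hsym b j]; ring
  rw [Finset.sum_congr rfl fun j _ => Finset.sum_congr rfl fun b _ => h1 j b]
  have h2 : ∀ j : Fin n, lam.1 j * (d j * mu.2 j) = mu.2 j * (d j * lam.1 j) := by
    intro j; ring
  have h3 : ∀ j : Fin n, lam.2 j * (d j * mu.1 j) = mu.1 j * (d j * lam.2 j) := by
    intro j; ring
  rw [Finset.sum_congr rfl fun j _ => h2 j, Finset.sum_congr rfl fun j _ => h3 j]
  ring

lemma BB_add_left (x y mu : PLat n) : BB A d (x + y) mu = BB A d x mu + BB A d y mu := by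
  unfold BB
  simp only [Prod.fst_add, Prod.snd_add, Pi.add_apply, add_mul]
  rw [Finset.sum_add_distrib, Finset.sum_add_distrib,
    Finset.sum_congr rfl fun j (_ : j ∈ Finset.univ) => Finset.sum_add_distrib,
    Finset.sum_add_distrib]
  ring

lemma BB_add_right (x y mu : PLat n) : BB A d mu (x + y) = BB A d mu x + BB A d mu y := by
  unfold BB
  simp only [Prod.fst_add, Prod.snd_add, Pi.add_apply, mul_add]
  rw [Finset.sum_add_distrib, Finset.sum_add_distrib,
    Finset.sum_congr rfl fun j (_ : j ∈ Finset.univ) => Finset.sum_add_distrib,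
    Finset.sum_add_distrib]
  ring

lemma BB_smul_left (c : ℤ) (x mu : PLat n) : BB A d (c • x) mu = c * BB A d x mu := by
  unfold BB
  have e1 : (∑ j, ∑ b, (c • x).1 j * (d j * A j b) * mu.1 b)
      = c * ∑ j, ∑ b, x.1 j * (d j * A j b) * mu.1 b := by
    rw [Finset.mul_sum]
    refine Finset.sum_congr rfl fun j _ => ?_
    rw [Finset.mul_sum]
    refine Finset.sum_congr rfl fun b _ => ?_
    show (c * x.1 j) * _ * _ = _
    ring
  have e2 : (∑ j, (c • x).1 j * (d j * mu.2 j)) = c * ∑ j, x.1 j * (d j * mu.2 j) := by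
    rw [Finset.mul_sum]
    refine Finset.sum_congr rfl fun j _ => ?_
    show (c * x.1 j) * _ = _
    ring
  have e3 : (∑ j, (c • x).2 j * (d j * mu.1 j)) = c * ∑ j, x.2 j * (d j * mu.1 j) := by
    rw [Finset.mul_sum]
    refine Finset.sum_congr rfl fun j _ => ?_
    show (c * x.2 j) * _ = _
    ring
  rw [e1, e2, e3]
  ring

lemma BB_neg_left (x mu : PLat n) : BB A d (-x) mu = -BB A d x mu := by
  have := BB_smul_left A d (-1) x mu
  simpa using this

lemma BB_sub_left (x y mu : PLat n) : BB A d (x - y) mu = BB A d x mu - BB A d y mu := by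
  rw [sub_eq_add_neg, BB_add_left, BB_neg_left]; ring

lemma BB_sub_right (x y mu : PLat n) : BB A d mu (x - y) = BB A d mu x - BB A d mu y := by
  have h : BB A d mu (-y) = -BB A d mu y := by
    unfold BB
    simp only [Prod.fst_neg, Prod.snd_neg, Pi.neg_apply, mul_neg, neg_mul,
      Finset.sum_neg_distrib]
    ring
  rw [sub_eq_add_neg, BB_add_right, h]; ring

lemma BB_zero_left (mu : PLat n) : BB A d 0 mu = 0 := by
  unfold BB; simp

lemma BB_sum_left {S : Finset ℕ} (g : ℕ → PLat n) (mu : PLat n) :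
    BB A d (∑ t ∈ S, g t) mu = ∑ t ∈ S, BB A d (g t) mu := by
  classical
  induction S using Finset.induction_on with
  | empty => simp [BB_zero_left]
  | insert _ _ hnot ih =>
    rw [Finset.sum_insert hnot, Finset.sum_insert hnot, BB_add_left, ih]

lemma pair_coroot_alP (i j : Fin n) : pairQP A (coroot i) (alP j) = A i j := by
  rw [pair_coroot]
  simp [alP, mul_ite_zero, Finset.sum_ite_eq' Finset.univ]

lemma BB_alP (j : Fin n) (mu : PLat n) :
    BB A d (alP j) mu = d j * pairQP A (coroot j) mu := by
  unfold BB
  rw [pair_coroot]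
  have t1 : (∑ k, ∑ b, (alP j).1 k * (d k * A k b) * mu.1 b)
      = ∑ b, (d j * A j b) * mu.1 b := by
    rw [← Fintype.sum_ite_eq' j (fun k => ∑ b, (d k * A k b) * mu.1 b)]
    refine Finset.sum_congr rfl fun k _ => ?_
    by_cases h : k = j
    · subst h
      simp only [if_pos rfl]
      exact Finset.sum_congr rfl fun b _ => by simp [alP]
    · simp [alP, h]
  have t2 : (∑ k, (alP j).1 k * (d k * mu.2 k)) = d j * mu.2 j := by
    rw [← Fintype.sum_ite_eq' j (fun k => d k * mu.2 k)]
    refine Finset.sum_congr rfl fun k _ => ?_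
    by_cases h : k = j <;> simp [alP, h]
  have t3 : (∑ k, (alP j).2 k * (d k * mu.1 k)) = 0 := by
    refine Finset.sum_eq_zero fun k _ => ?_
    simp [alP]
  rw [t1, t2, t3, add_zero, mul_add, Finset.mul_sum]
  congr 1
  exact Finset.sum_congr rfl fun b _ => by ring

lemma BB_alP_right (hsym : ∀ i j, d i * A i j = d j * A j i) (j : Fin n) (mu : PLat n) :
    BB A d mu (alP j) = d j * pairQP A (coroot j) mu := by
  rw [BB_symm A d hsym, BB_alP]

lemma BB_smul_right (hsym : ∀ i j, d i * A i j = d j * A j i) (c : ℤ) (x mu : PLat n) :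
    BB A d mu (c • x) = c * BB A d mu x := by
  rw [BB_symm A d hsym, BB_smul_left, BB_symm A d hsym]

lemma BB_alP_alP (i j : Fin n) : BB A d (alP i) (alP j) = d i * A i j := by
  rw [BB_alP, pair_coroot_alP]

lemma pair_coroot_sub_smul (i a : Fin n) (c : ℤ) (lam : PLat n) :
    pairQP A (coroot i) (lam - c • alP a) = pairQP A (coroot i) lam - c * A i a := by
  rw [pair_coroot, pair_coroot]
  have h1 : ∀ b : Fin n, (lam - c • alP a).1 b
      = lam.1 b - c * (if b = a then 1 else 0) := fun b => rfl
  have h2 : (lam - c • alP a).2 i = lam.2 i := by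
    show lam.2 i - c * (0:ℤ) = lam.2 i
    ring
  rw [h2, Finset.sum_congr rfl fun b (_ : b ∈ Finset.univ) => by rw [h1 b]]
  have h3 : ∀ b : Fin n, A i b * (lam.1 b - c * (if b = a then 1 else 0))
      = A i b * lam.1 b - (if b = a then A i a * c else 0) := by
    intro b
    by_cases h : b = a
    · subst h; simp; ring
    · simp [h]
  rw [Finset.sum_congr rfl fun b (_ : b ∈ Finset.univ) => h3 b, Finset.sum_sub_distrib,
    Finset.sum_ite_eq' Finset.univ a]
  simp
  ring

lemma BB_sP (hA : ∀ i, A i i = 2) (hsym : ∀ i j, d i * A i j = d j * A j i)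
    (a : Fin n) (lam mu : PLat n) :
    BB A d (sP A a lam) (sP A a mu) = BB A d lam mu := by
  rw [sP_eq_sub A a lam, sP_eq_sub A a mu]
  simp only [BB_sub_left, BB_sub_right, BB_smul_left, BB_smul_right A d hsym,
    BB_alP, BB_alP_right A d hsym, pair_coroot_alP, pair_coroot_sub_smul, hA]
  ring

lemma BB_wP (hA : ∀ i, A i i = 2) (hsym : ∀ i j, d i * A i j = d j * A j i)
    (l : ℕ) (lam mu : PLat n) :
    BB A d (wP A ii l lam) (wP A ii l mu) = BB A d lam mu := by
  induction l generalizing lam mu with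
  | zero => rfl
  | succ c ih =>
    show BB A d (wP A ii c (sP A (ii (c+1)) lam)) (wP A ii c (sP A (ii (c+1)) mu)) = _
    rw [ih, BB_sP A d hA hsym]

lemma sP_sub (a : Fin n) (lam : PLat n) :
    lam - sP A a lam = (pairQP A (coroot a) lam) • alP a := by
  rw [sP_eq_sub]
  abel

lemma BB_sP_alP (hA : ∀ i, A i i = 2) (hsym : ∀ i j, d i * A i j = d j * A j i)
    (j : Fin n) (x : PLat n) :
    BB A d (sP A j x) (alP j) = -BB A d x (alP j) := by
  conv_lhs => rw [← sP_invol A hA j (alP j)]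
  rw [BB_sP A d hA hsym, sP_eq_sub, pair_coroot_alP, hA, BB_sub_right,
    BB_smul_right A d hsym]
  ring

lemma telescope (b : ℕ) : ∀ {a : ℕ}, a ≤ b → ∀ (lam : PLat n),
    lam - uW A ii a b lam
      = ∑ t ∈ Finset.Ioc a b, (pairQP A (coroot (ii t)) (uW A ii t b lam)) • alP (ii t) := by
  induction b with
  | zero =>
    intro a ha lam
    have : a = 0 := by omega
    subst this
    simp [uW]
  | succ c ih =>
    intro a ha lam
    rcases Nat.lt_or_ge a (c+1) with hc | hc
    · have hac : a ≤ c := by omega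
      rw [Finset.sum_Ioc_succ_top hac, uW_succ A ii hac lam]
      have heq : ∀ t ∈ Finset.Ioc a c,
          (pairQP A (coroot (ii t)) (uW A ii t (c+1) lam)) • alP (ii t)
            = (pairQP A (coroot (ii t)) (uW A ii t c (sP A (ii (c+1)) lam))) • alP (ii t) := by
        intro t ht
        rw [uW_succ A ii (Finset.mem_Ioc.mp ht).2 lam]
      rw [Finset.sum_congr rfl heq, ← ih hac (sP A (ii (c+1)) lam), uW_self]
      have hstep := sP_sub A (ii (c+1)) lam
      show lam - uW A ii a c (sP A (ii (c+1)) lam) = _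
      simp only [id_eq]
      rw [← hstep]
      abel
    · have : a = c+1 := by omega
      subst this
      rw [uW_self]
      simp

lemma telescope_partial {a b c : ℕ} (hab : a ≤ b) (hbc : b ≤ c) (lam : PLat n) :
    (∑ t ∈ Finset.Ioc a b, (pairQP A (coroot (ii t)) (uW A ii t c lam)) • alP (ii t))
      = uW A ii b c lam - uW A ii a c lam := by
  have h1 := telescope A ii c (le_trans hab hbc) lam
  have h2 := telescope A ii c hbc lam
  have h3 := Finset.sum_Ioc_consecutive
    (f := fun t => (pairQP A (coroot (ii t)) (uW A ii t c lam)) • alP (ii t)) hab hbc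
  have h4 : (∑ t ∈ Finset.Ioc a b, (pairQP A (coroot (ii t)) (uW A ii t c lam)) • alP (ii t))
      = (lam - uW A ii a c lam) - (lam - uW A ii b c lam) := by
    rw [h1, h2, ← h3]
    abel
  rw [h4]
  abel

lemma pairAl_eq_BB (mu lam : PLat n) (h : mu.2 = 0) :
    pairAl A d mu lam = BB A d mu lam := by
  unfold pairAl BB
  rw [h]
  simp only [Pi.zero_apply, zero_mul, Finset.sum_const_zero, add_zero]
  rw [← Finset.sum_add_distrib]
  refine Finset.sum_congr rfl fun j _ => ?_
  rw [pair_coroot]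
  have hb : (∑ b, mu.1 j * (d j * A j b) * lam.1 b)
      = mu.1 j * (d j * ∑ b, A j b * lam.1 b) := by
    rw [Finset.mul_sum, Finset.mul_sum]
    exact Finset.sum_congr rfl fun b _ => by ring
  rw [hb]
  ring

end Aux

lemma fin_sum_if {M : Type*} [AddCommMonoid M] {m k : ℕ} (hk : k ≤ m) (g : ℕ → M) :
    (∑ p : Fin m, if (p:ℕ)+1 ≤ k then g ((p:ℕ)+1) else 0)
      = ∑ t ∈ Finset.Ioc 0 k, g t := by
  rw [Fin.sum_univ_eq_sum_range (fun j => if j+1 ≤ k then g (j+1) else 0) m]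
  have h1 : (∑ j ∈ Finset.range m, if j+1 ≤ k then g (j+1) else 0)
      = ∑ j ∈ Finset.range k, g (j+1) := by
    rw [← Finset.sum_subset (Finset.range_subset_range.2 hk)
      (fun x _ hx => by rw [if_neg (by simp at hx ⊢; omega)])]
    exact Finset.sum_congr rfl fun j hj => by
      rw [if_pos (by simp at hj; omega)]
  rw [h1]
  have h2 : Finset.Ioc 0 k = Finset.Ico 1 (k+1) := by
    ext t; simp; omega
  rw [h2, Finset.sum_Ico_eq_sum_range]
  simp only [Nat.add_sub_cancel]
  exact (Finset.sum_congr rfl fun j _ => by rw [Nat.add_comm]).symm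



section Aux2

variable (A : Fin n → Fin n → ℤ) (d : Fin n → ℤ) (ii : ℕ → Fin n)

/-- `F(s,l) = (α_{i_s}^∨ , s_{i_{s+1}}⋯s_{i_l} ω_{i_l})`. -/
def Fc (s l : ℕ) : ℤ := pairQP A (coroot (ii s)) (uW A ii s l (omP (ii l)))

/-- `Φ'(s,t) = Φ_𝐢(ε_s, ε_t)` in 1-based indices. -/
def Phic (s t : ℕ) : ℤ :=
  if s = t then -(d (ii s)) else if t < s then -(d (ii t) * A (ii t) (ii s)) else 0

lemma Fw_eq (hA : ∀ i, A i i = 2) {s l : ℕ} (h : s ≤ l) :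
    pairQP A (wQ A ii s (coroot (ii s))) (wP A ii l (omP (ii l))) = Fc A ii s l := by
  rw [pair_wQ_rW, wP_eq_uW, rW_uW A ii hA h]
  rfl

lemma inner_gt (hsym : ∀ i j, d i * A i j = d j * A j i) {s l : ℕ} (hls : l < s) :
    (∑ t ∈ Finset.Ioc 0 l, Fc A ii t l * Phic A d ii s t)
      = BB A d (uW A ii 0 l (omP (ii l))) (alP (ii s))
        - BB A d (omP (ii l)) (alP (ii s)) := by
  have h1 : ∀ t ∈ Finset.Ioc 0 l, Fc A ii t l * Phic A d ii s t
      = -(BB A d (Fc A ii t l • alP (ii t)) (alP (ii s))) := by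
    intro t ht
    rw [Finset.mem_Ioc] at ht
    rw [BB_smul_left, BB_alP_alP]
    unfold Phic
    rw [if_neg (by omega), if_pos (by omega)]
    ring
  rw [Finset.sum_congr rfl h1, Finset.sum_neg_distrib, ← BB_sum_left]
  have h2 : (∑ t ∈ Finset.Ioc 0 l, Fc A ii t l • alP (ii t))
      = omP (ii l) - uW A ii 0 l (omP (ii l)) :=
    (telescope A ii l (Nat.zero_le l) (omP (ii l))).symm
  rw [h2, BB_sub_left]
  ring

lemma inner_le (hA : ∀ i, A i i = 2) (hsym : ∀ i j, d i * A i j = d j * A j i)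
    {s l : ℕ} (hs1 : 1 ≤ s) (hsl : s ≤ l) :
    (∑ t ∈ Finset.Ioc 0 l, Fc A ii t l * Phic A d ii s t)
      = BB A d (uW A ii 0 l (omP (ii l))) (alP (ii s)) := by
  obtain ⟨s', rfl⟩ : ∃ s', s = s'+1 := ⟨s-1, by omega⟩
  have hs'l : s' ≤ l := by omega
  rw [← Finset.sum_Ioc_consecutive
    (f := fun t => Fc A ii t l * Phic A d ii (s'+1) t) (Nat.zero_le s') hs'l]
  have hPartA : (∑ t ∈ Finset.Ioc 0 s', Fc A ii t l * Phic A d ii (s'+1) t)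
      = BB A d (uW A ii 0 l (omP (ii l))) (alP (ii (s'+1)))
        - BB A d (uW A ii s' l (omP (ii l))) (alP (ii (s'+1))) := by
    have h1 : ∀ t ∈ Finset.Ioc 0 s', Fc A ii t l * Phic A d ii (s'+1) t
        = -(BB A d (Fc A ii t l • alP (ii t)) (alP (ii (s'+1)))) := by
      intro t ht
      rw [Finset.mem_Ioc] at ht
      rw [BB_smul_left, BB_alP_alP]
      unfold Phic
      rw [if_neg (by omega), if_pos (by omega)]
      ring
    rw [Finset.sum_congr rfl h1, Finset.sum_neg_distrib, ← BB_sum_left]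
    have h2 : (∑ t ∈ Finset.Ioc 0 s', Fc A ii t l • alP (ii t))
        = uW A ii s' l (omP (ii l)) - uW A ii 0 l (omP (ii l)) :=
      telescope_partial A ii (Nat.zero_le s') hs'l (omP (ii l))
    rw [h2, BB_sub_left]
    ring
  have hPartB : (∑ t ∈ Finset.Ioc s' l, Fc A ii t l * Phic A d ii (s'+1) t)
      = -(Fc A ii (s'+1) l * d (ii (s'+1))) := by
    rw [Finset.sum_eq_single (s'+1)]
    · unfold Phic
      rw [if_pos rfl]
      ring
    · intro t ht hne
      rw [Finset.mem_Ioc] at ht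
      unfold Phic
      rw [if_neg (by omega), if_neg (by omega), mul_zero]
    · intro h
      exact absurd (Finset.mem_Ioc.mpr ⟨by omega, by omega⟩) h
  have hcons : BB A d (uW A ii s' l (omP (ii l))) (alP (ii (s'+1)))
      = -(BB A d (uW A ii (s'+1) l (omP (ii l))) (alP (ii (s'+1)))) := by
    rw [uW_cons A ii hA (show s' < l by omega), BB_sP_alP A d hA hsym]
  have hval : BB A d (uW A ii (s'+1) l (omP (ii l))) (alP (ii (s'+1)))
      = d (ii (s'+1)) * Fc A ii (s'+1) l := by
    rw [BB_alP_right A d hsym]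
    rfl
  rw [hPartA, hPartB, hcons, hval]
  ring

lemma telescopeF {a b : ℕ} (h : a ≤ b) :
    omP (ii b) - uW A ii a b (omP (ii b))
      = ∑ t ∈ Finset.Ioc a b, Fc A ii t b • alP (ii t) :=
  telescope A ii b h (omP (ii b))

lemma telescope_partialF {a b c : ℕ} (hab : a ≤ b) (hbc : b ≤ c) :
    (∑ t ∈ Finset.Ioc a b, Fc A ii t c • alP (ii t))
      = uW A ii b c (omP (ii c)) - uW A ii a c (omP (ii c)) :=
  telescope_partial A ii hab hbc (omP (ii c))

end Aux2


/-- values of `Φ_𝐢` on the vectors `φ'_𝐢(ε_k)`. -/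
theorem Phi_phi'_eps {n m : ℕ} (hm : 1 ≤ m)
    (A : Fin n → Fin n → ℤ) (d : Fin n → ℤ)
    (hA : ∀ i, A i i = 2) (hd : ∀ i, 0 < d i)
    (hsym : ∀ i j, d i * A i j = d j * A j i)
    (ii : ℕ → Fin n)
    (k : ℕ) (hk1 : 1 ≤ k) (hk2 : k ≤ m)
    (l : ℕ) (hl1 : 1 ≤ l) (hl2 : l ≤ m) :
    PhiF A d ii m (phiMap' A ii m (eps m k)) (phiMap' A ii m (eps m l)) =
      if k < l then
        pairAl A d (omP (ii k) - wP A ii k (omP (ii k))) (wP A ii l (omP (ii l)))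
      else
        pairAl A d (wP A ii l (omP (ii l)) - omP (ii l)) (omP (ii k)) := by
  classical
  -- Step 1: `phiMap'` applied to a basis vector.
  have hmap : ∀ j : ℕ, 1 ≤ j → j ≤ m → phiMap' A ii m (eps m j) = phiE' A ii m j := by
    intro j hj1 hj2
    unfold phiMap'
    rw [Finset.sum_eq_single (⟨j-1, by omega⟩ : Fin m)]
    · have h1 : ((⟨j-1, by omega⟩ : Fin m) : ℕ) + 1 = j := by simp; omega
      rw [h1]
      have h2 : eps m j (⟨j-1, by omega⟩ : Fin m) = 1 := by
        unfold eps
        rw [if_pos (by simp; omega)]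
      rw [h2, one_smul]
    · intro b _ hb
      have h3 : eps m j b = 0 := by
        unfold eps
        rw [if_neg]
        intro hc
        refine hb (Fin.ext ?_)
        show (b:ℕ) = j - 1
        omega
      rw [h3, zero_smul]
    · intro h
      exact absurd (Finset.mem_univ _) h
  -- Step 2: coordinates of `phiE'`.
  have hcoord : ∀ (j : ℕ), j ≤ m → ∀ p : Fin m,
      phiE' A ii m j p = -(if (p:ℕ)+1 ≤ j then Fc A ii ((p:ℕ)+1) j else 0) := by
    intro j hj p
    unfold phiE'
    rw [Pi.neg_apply, Finset.sum_apply]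
    have h1 : ∀ q : Fin m,
        ((if (q:ℕ)+1 ≤ j then
            pairQP A (wQ A ii ((q:ℕ)+1) (coroot (ii ((q:ℕ)+1)))) (wP A ii j (omP (ii j)))
          else 0) • eps m ((q:ℕ)+1)) p
        = (if (q:ℕ)+1 ≤ j then
            pairQP A (wQ A ii ((q:ℕ)+1) (coroot (ii ((q:ℕ)+1)))) (wP A ii j (omP (ii j)))
          else 0) * (if (p:ℕ)+1 = (q:ℕ)+1 then 1 else 0) := by
      intro q
      rfl
    rw [Finset.sum_congr rfl fun q _ => h1 q, Finset.sum_eq_single p]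
    · rw [if_pos rfl, mul_one]
      congr 1
      by_cases h : (p:ℕ)+1 ≤ j
      · rw [if_pos h, if_pos h, Fw_eq A ii hA h]
      · rw [if_neg h, if_neg h]
    · intro q _ hq
      have hne : ¬((p:ℕ)+1 = (q:ℕ)+1) := by
        intro hc
        refine hq (Fin.ext ?_).symm
        show (p:ℕ) = (q:ℕ)
        omega
      rw [if_neg hne, mul_zero]
    · intro h
      exact absurd (Finset.mem_univ _) h
  -- Step 3: compare the `Fin m`-indexed form factor with `Phic`.
  have hITE : ∀ p q : Fin m,
      (if (p:ℕ) = (q:ℕ) then -(d (ii ((p:ℕ)+1)))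
        else if (q:ℕ) < (p:ℕ) then
          -(d (ii ((q:ℕ)+1)) * A (ii ((q:ℕ)+1)) (ii ((p:ℕ)+1)))
        else 0)
      = Phic A d ii ((p:ℕ)+1) ((q:ℕ)+1) := by
    intro p q
    unfold Phic
    by_cases h1 : (p:ℕ) = (q:ℕ)
    · rw [if_pos h1, if_pos (show (p:ℕ)+1 = (q:ℕ)+1 by omega), h1]
    · rw [if_neg h1, if_neg (show ¬((p:ℕ)+1 = (q:ℕ)+1) by omega)]
      by_cases h2 : (q:ℕ) < (p:ℕ)
      · rw [if_pos h2, if_pos (show (q:ℕ)+1 < (p:ℕ)+1 by omega)]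
      · rw [if_neg h2, if_neg (show ¬((q:ℕ)+1 < (p:ℕ)+1) by omega)]
  -- Step 4: rewrite the left-hand side as a double sum over `Ioc`.
  have hLHS : PhiF A d ii m (phiMap' A ii m (eps m k)) (phiMap' A ii m (eps m l))
      = ∑ s ∈ Finset.Ioc 0 k, ∑ t ∈ Finset.Ioc 0 l,
          Fc A ii s k * Fc A ii t l * Phic A d ii s t := by
    rw [hmap k hk1 hk2, hmap l hl1 hl2]
    unfold PhiF
    have h2 : ∀ p : Fin m, (∑ q : Fin m, phiE' A ii m k p * phiE' A ii m l q *
          (if (p:ℕ) = (q:ℕ) then -(d (ii ((p:ℕ)+1)))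
            else if (q:ℕ) < (p:ℕ) then
              -(d (ii ((q:ℕ)+1)) * A (ii ((q:ℕ)+1)) (ii ((p:ℕ)+1)))
            else 0))
        = (if (p:ℕ)+1 ≤ k then
            (∑ t ∈ Finset.Ioc 0 l, Fc A ii ((p:ℕ)+1) k * Fc A ii t l
              * Phic A d ii ((p:ℕ)+1) t)
          else 0) := by
      intro p
      have h3 : ∀ q : Fin m, phiE' A ii m k p * phiE' A ii m l q *
          (if (p:ℕ) = (q:ℕ) then -(d (ii ((p:ℕ)+1)))
            else if (q:ℕ) < (p:ℕ) then
              -(d (ii ((q:ℕ)+1)) * A (ii ((q:ℕ)+1)) (ii ((p:ℕ)+1)))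
            else 0)
          = (if (p:ℕ)+1 ≤ k then
              (if (q:ℕ)+1 ≤ l then
                Fc A ii ((p:ℕ)+1) k * Fc A ii ((q:ℕ)+1) l
                  * Phic A d ii ((p:ℕ)+1) ((q:ℕ)+1)
              else 0)
            else 0) := by
        intro q
        rw [hcoord k hk2 p, hcoord l hl2 q, hITE p q]
        by_cases h4 : (p:ℕ)+1 ≤ k
        · rw [if_pos h4, if_pos h4]
          by_cases h5 : (q:ℕ)+1 ≤ l
          · rw [if_pos h5, if_pos h5]
            ring
          · rw [if_neg h5, if_neg h5]
            ring
        · rw [if_neg h4, if_neg h4]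
          ring
      rw [Finset.sum_congr rfl fun q _ => h3 q]
      by_cases h4 : (p:ℕ)+1 ≤ k
      · simp only [if_pos h4]
        exact fin_sum_if hl2 fun t => Fc A ii ((p:ℕ)+1) k * Fc A ii t l
          * Phic A d ii ((p:ℕ)+1) t
      · simp only [if_neg h4]
        exact Finset.sum_const_zero
    rw [Finset.sum_congr rfl fun p _ => h2 p]
    exact fin_sum_if hk2 fun s => ∑ t ∈ Finset.Ioc 0 l,
      Fc A ii s k * Fc A ii t l * Phic A d ii s t
  rw [hLHS]
  -- Step 5: factor out `Fc s k` in the inner sums.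
  have hfac : ∀ s : ℕ, (∑ t ∈ Finset.Ioc 0 l, Fc A ii s k * Fc A ii t l * Phic A d ii s t)
      = Fc A ii s k * ∑ t ∈ Finset.Ioc 0 l, Fc A ii t l * Phic A d ii s t := by
    intro s
    rw [Finset.mul_sum]
    exact Finset.sum_congr rfl fun t _ => by ring
  by_cases hkl : k < l
  · -- case k < l
    rw [if_pos hkl]
    have h5 : ∀ s ∈ Finset.Ioc 0 k,
        (∑ t ∈ Finset.Ioc 0 l, Fc A ii s k * Fc A ii t l * Phic A d ii s t)
          = BB A d (Fc A ii s k • alP (ii s)) (uW A ii 0 l (omP (ii l))) := by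
      intro s hs
      rw [Finset.mem_Ioc] at hs
      rw [hfac s, inner_le A d ii hA hsym (by omega) (by omega),
        BB_smul_left, BB_symm A d hsym (alP (ii s))]
    have hsnd : (omP (ii k) - wP A ii k (omP (ii k))).2 = 0 := by
      show (omP (ii k)).2 - (wP A ii k (omP (ii k))).2 = 0
      rw [wP_snd, sub_self]
    rw [Finset.sum_congr rfl h5, ← BB_sum_left, ← telescopeF A ii (Nat.zero_le k),
      pairAl_eq_BB A d _ _ hsnd, wP_eq_uW A ii k, wP_eq_uW A ii l]
  · -- case l ≤ k
    rw [if_neg hkl]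
    have hlk : l ≤ k := by omega
    rw [← Finset.sum_Ioc_consecutive
      (f := fun s => ∑ t ∈ Finset.Ioc 0 l, Fc A ii s k * Fc A ii t l * Phic A d ii s t)
      (Nat.zero_le l) hlk]
    have hS1 : (∑ s ∈ Finset.Ioc 0 l, ∑ t ∈ Finset.Ioc 0 l,
          Fc A ii s k * Fc A ii t l * Phic A d ii s t)
        = BB A d (uW A ii l k (omP (ii k)) - uW A ii 0 k (omP (ii k)))
            (uW A ii 0 l (omP (ii l))) := by
      have h5 : ∀ s ∈ Finset.Ioc 0 l,
          (∑ t ∈ Finset.Ioc 0 l, Fc A ii s k * Fc A ii t l * Phic A d ii s t)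
            = BB A d (Fc A ii s k • alP (ii s)) (uW A ii 0 l (omP (ii l))) := by
        intro s hs
        rw [Finset.mem_Ioc] at hs
        rw [hfac s, inner_le A d ii hA hsym (by omega) (by omega),
          BB_smul_left, BB_symm A d hsym (alP (ii s))]
      rw [Finset.sum_congr rfl h5, ← BB_sum_left, telescope_partialF A ii (Nat.zero_le l) hlk]
    have hS2 : (∑ s ∈ Finset.Ioc l k, ∑ t ∈ Finset.Ioc 0 l,
          Fc A ii s k * Fc A ii t l * Phic A d ii s t)
        = BB A d (omP (ii k) - uW A ii l k (omP (ii k)))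
            (uW A ii 0 l (omP (ii l)) - omP (ii l)) := by
      have h6 : ∀ s ∈ Finset.Ioc l k,
          (∑ t ∈ Finset.Ioc 0 l, Fc A ii s k * Fc A ii t l * Phic A d ii s t)
            = BB A d (Fc A ii s k • alP (ii s))
                (uW A ii 0 l (omP (ii l)) - omP (ii l)) := by
        intro s hs
        rw [Finset.mem_Ioc] at hs
        rw [hfac s, inner_gt A d ii hsym (by omega)]
        have e1 : BB A d (uW A ii 0 l (omP (ii l))) (alP (ii s))
            = BB A d (alP (ii s)) (uW A ii 0 l (omP (ii l))) :=
          BB_symm A d hsym _ _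
        have e2 : BB A d (omP (ii l)) (alP (ii s))
            = BB A d (alP (ii s)) (omP (ii l)) := BB_symm A d hsym _ _
        rw [e1, e2, ← BB_sub_right, ← BB_smul_left]
      rw [Finset.sum_congr rfl h6, ← BB_sum_left, ← telescopeF A ii hlk]
    rw [hS1, hS2]
    have hsnd2 : (wP A ii l (omP (ii l)) - omP (ii l)).2 = 0 := by
      show (wP A ii l (omP (ii l))).2 - (omP (ii l)).2 = 0
      rw [wP_snd, sub_self]
    rw [pairAl_eq_BB A d _ _ hsnd2, wP_eq_uW A ii l]
    have hwk : BB A d (uW A ii 0 k (omP (ii k))) (uW A ii 0 l (omP (ii l)))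
        = BB A d (uW A ii l k (omP (ii k))) (omP (ii l)) := by
      rw [← wP_eq_uW A ii k (omP (ii k)), ← wP_eq_uW A ii l (omP (ii l)),
        wP_split A ii hlk (omP (ii k)), BB_wP A d ii hA hsym]
    have e1 : BB A d (omP (ii k)) (uW A ii 0 l (omP (ii l)))
        = BB A d (uW A ii 0 l (omP (ii l))) (omP (ii k)) := BB_symm A d hsym _ _
    have e2 : BB A d (omP (ii l)) (omP (ii k))
        = BB A d (omP (ii k)) (omP (ii l)) := BB_symm A d hsym _ _
    rw [BB_sub_left, BB_sub_left, BB_sub_right, BB_sub_right, BB_sub_left]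
    linear_combination (-1 : ℤ) * hwk + e1 + e2
end

section
/- Assume that $\mathbf{ex}$ is an initial segment, i.e. $\mathbf{ex}=\{1,\dots,m-r\}$ where $r$ is the number of indices $k\in[1,m]$ with $k^+=m+1$. Define $\delta_\ell=0$ if $\ell\in\mathbf{ex}$ and $\delta_\ell=1$ otherwise, and for $k\in\mathbf{ex}$ set $\mathbf{b}^k_\pm=\sum_{p\in\mathbf{ex}} b_{pk}\varepsilon_p\pm\delta_{k^+}\varepsilon_{k^+}$. Then for each choice of sign, every $k\in\mathbf{ex}$, and every $\ell\in\{1,\dots,m\}$ one has $\Lambda_\mathbf{i}\big(\varphi'_\mathbf{i}(\rho_\mathbf{i}^\pm(\mathbf{b}^k_\pm)),\ \varphi'_\mathbf{i}(\rho_\mathbf{i}^\pm(\varepsilon_\ell))\big)=2\,d_{i_k}\,\delta_{k\ell}$. -/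
open Finset

variable {n : ℕ}

/-- `δ_ℓ = 0` if `ℓ ∈ 𝐞𝐱` and `δ_ℓ = 1` otherwise. -/
noncomputable def deltaEx (ii : ℕ → Fin n) (m l : ℕ) : ℤ :=
  if 1 ≤ l ∧ kplus ii m l ≤ m then 0 else 1

/-- The truncation `𝐛^k₊ = ∑_{p ∈ 𝐞𝐱} b_{pk} ε_p + δ_{k⁺} ε_{k⁺}`. -/
noncomputable def bvecP (A : Fin n → Fin n → ℤ) (ii : ℕ → Fin n) (m k : ℕ) :
    Fin m → ℤ :=
  ((fun p : Fin m => if kplus ii m ((p:ℕ)+1) ≤ m then bcoef A ii m ((p:ℕ)+1) k else 0) : Fin m → ℤ)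
    + deltaEx ii m (kplus ii m k) • eps m (kplus ii m k)

/-- The truncation `𝐛^k₋ = ∑_{p ∈ 𝐞𝐱} b_{pk} ε_p - δ_{k⁺} ε_{k⁺}`. -/
noncomputable def bvecM (A : Fin n → Fin n → ℤ) (ii : ℕ → Fin n) (m k : ℕ) :
    Fin m → ℤ :=
  ((fun p : Fin m => if kplus ii m ((p:ℕ)+1) ≤ m then bcoef A ii m ((p:ℕ)+1) k else 0) : Fin m → ℤ)
    - deltaEx ii m (kplus ii m k) • eps m (kplus ii m k)

section KplusKminus
variable {n : ℕ} (ii : ℕ → Fin n) (m : ℕ)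

lemma kplus_mem (k : ℕ) :
    kplus ii m k ∈ ({l | k < l ∧ l ≤ m ∧ ii l = ii k} ∪ {m+1} : Set ℕ) := by
  apply Nat.sInf_mem
  exact ⟨m+1, Or.inr rfl⟩

lemma kplus_le {k l : ℕ} (h1 : k < l) (h2 : l ≤ m) (h3 : ii l = ii k) :
    kplus ii m k ≤ l := Nat.sInf_le (Or.inl ⟨h1, h2, h3⟩)

lemma kplus_gt {k : ℕ} (hk : k ≤ m) : k < kplus ii m k := by
  rcases kplus_mem ii m k with h | h
  · exact h.1
  · simp only [Set.mem_singleton_iff] at h; omega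

lemma kplus_spec {k : ℕ} (h : kplus ii m k ≤ m) :
    k < kplus ii m k ∧ ii (kplus ii m k) = ii k := by
  rcases kplus_mem ii m k with hh | hh
  · exact ⟨hh.1, hh.2.2⟩
  · simp only [Set.mem_singleton_iff] at hh; omega

lemma kplus_le_succ (k : ℕ) : kplus ii m k ≤ m + 1 :=
  Nat.sInf_le (Or.inr rfl)

lemma kminus_bdd (k : ℕ) :
    BddAbove ({l | 1 ≤ l ∧ l < k ∧ ii l = ii k} ∪ {0} : Set ℕ) := by
  refine ⟨k, fun x hx => ?_⟩
  rcases hx with h | h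
  · exact le_of_lt h.2.1
  · simp only [Set.mem_singleton_iff] at h; omega

lemma kminus_mem (k : ℕ) :
    kminus ii k ∈ ({l | 1 ≤ l ∧ l < k ∧ ii l = ii k} ∪ {0} : Set ℕ) :=
  Nat.sSup_mem ⟨0, Or.inr rfl⟩ (kminus_bdd ii k)

lemma kminus_ge {k l : ℕ} (h1 : 1 ≤ l) (h2 : l < k) (h3 : ii l = ii k) :
    l ≤ kminus ii k := le_csSup (kminus_bdd ii k) (Or.inl ⟨h1, h2, h3⟩)

lemma kminus_lt {k : ℕ} (hk : 1 ≤ k) : kminus ii k < k := by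
  rcases kminus_mem ii k with h | h
  · exact h.2.1
  · simp only [Set.mem_singleton_iff] at h; omega

/-- If `k⁺ = j ≤ m` then `j⁻ = k`. -/
lemma kminus_kplus {k : ℕ} (hk : 1 ≤ k) (h : kplus ii m k ≤ m) :
    kminus ii (kplus ii m k) = k := by
  obtain ⟨hlt, hii⟩ := kplus_spec ii m h
  have h1 : k ≤ kminus ii (kplus ii m k) := kminus_ge ii hk hlt hii.symm
  rcases kminus_mem ii (kplus ii m k) with hh | hh
  · simp only [Set.mem_setOf_eq] at hh
    by_contra hne
    have h2 : k < kminus ii (kplus ii m k) := lt_of_le_of_ne h1 (fun e => hne e.symm)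
    have : kplus ii m k ≤ kminus ii (kplus ii m k) :=
      kplus_le ii m h2 (le_trans (le_of_lt hh.2.1) h) (hh.2.2.trans hii)
    have h4 := hh.2.1
    omega
  · simp only [Set.mem_singleton_iff] at hh; omega

/-- If `j⁻ = p ≥ 1` and `j ≤ m` then `p⁺ = j`. -/
lemma kplus_kminus {j : ℕ} (hj : j ≤ m) (hp : 1 ≤ kminus ii j) :
    kplus ii m (kminus ii j) = j := by
  rcases kminus_mem ii j with hh | hh
  · simp only [Set.mem_setOf_eq] at hh
    have h1 : kplus ii m (kminus ii j) ≤ j := kplus_le ii m hh.2.1 hj hh.2.2.symm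
    by_contra hne
    have h2 : kplus ii m (kminus ii j) < j := lt_of_le_of_ne h1 hne
    have h3 := kplus_spec ii m (le_trans h1 hj)
    have : kplus ii m (kminus ii j) ≤ kminus ii j :=
      kminus_ge ii (by omega) h2 (h3.2.trans hh.2.2)
    omega
  · simp only [Set.mem_singleton_iff] at hh; omega

/-- `p⁺ = k ↔ p = k⁻` for `1 ≤ p`, `1 ≤ k ≤ m`. -/
lemma kplus_eq_iff_kminus {p k : ℕ} (hp : 1 ≤ p) (hk1 : 1 ≤ k) (hk2 : k ≤ m) :
    kplus ii m p = k ↔ kminus ii k = p := by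
  constructor
  · intro h
    have := kminus_kplus ii m (k := p) hp (by omega)
    rwa [h] at this
  · intro h
    have := kplus_kminus ii m (j := k) hk2 (by omega)
    rwa [h] at this

end KplusKminus
section PairAlgebra
variable {n : ℕ} (A : Fin n → Fin n → ℤ) (ii : ℕ → Fin n)

lemma pairQP_add_left (x y : QvLat n) (lam : PLat n) :
    pairQP A (x + y) lam = pairQP A x lam + pairQP A y lam := by
  simp [pairQP, add_mul, Finset.sum_add_distrib]
  ring

lemma pairQP_smul_left (c : ℤ) (x : QvLat n) (lam : PLat n) :
    pairQP A (c • x) lam = c * pairQP A x lam := by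
  simp only [pairQP, Pi.smul_apply, smul_eq_mul, mul_add, Finset.mul_sum]
  congr 1
  · apply Finset.sum_congr rfl; intro a _
    apply Finset.sum_congr rfl; intro b _; ring
  · apply Finset.sum_congr rfl; intro a _; ring

lemma pairQP_sub_left (x y : QvLat n) (lam : PLat n) :
    pairQP A (x - y) lam = pairQP A x lam - pairQP A y lam := by
  simp [pairQP, sub_mul, Finset.sum_sub_distrib]
  ring

lemma pairQP_neg_left (x : QvLat n) (lam : PLat n) :
    pairQP A (-x) lam = -pairQP A x lam := by
  simp [pairQP]
  ring

lemma pairQP_sum_left {s : Finset ℕ} (f : ℕ → QvLat n) (lam : PLat n) :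
    pairQP A (∑ i ∈ s, f i) lam = ∑ i ∈ s, pairQP A (f i) lam := by
  classical
  induction s using Finset.induction_on with
  | empty => simp [pairQP]
  | @insert a s' h ih => simp [Finset.sum_insert h, pairQP_add_left, ih]

lemma pairQP_coroot_omP (j l : Fin n) :
    pairQP A (coroot j) (omP l) = if j = l then 1 else 0 := by
  simp [pairQP, coroot, omP, Finset.sum_ite_eq', ite_and]
  simp [eq_comm]

lemma pairQP_coroot (a : Fin n) (lam : PLat n) :
    pairQP A (coroot a) lam = (∑ k, A a k * lam.1 k) + lam.2 a := by
  simp only [pairQP, coroot]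
  congr 1
  · rw [Finset.sum_eq_single a]
    · apply Finset.sum_congr rfl; intro b _; rw [if_pos rfl]; ring
    · intro b _ hb
      apply Finset.sum_eq_zero; intro c _; rw [if_neg hb]; ring
    · intro h; exact absurd (Finset.mem_univ a) h
  · rw [Finset.sum_eq_single a]
    · rw [if_pos rfl]; ring
    · intro b _ hb; rw [if_neg hb]; ring
    · intro h; exact absurd (Finset.mem_univ a) h

lemma pairQP_alP (x : QvLat n) (a : Fin n) :
    pairQP A x (alP a) = ∑ k, A k a * x k := by
  simp only [pairQP, alP]
  rw [Finset.sum_congr rfl (fun p _ => Finset.sum_eq_single a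
      (fun b _ hb => by rw [if_neg hb]; ring)
      (fun h => absurd (Finset.mem_univ a) h))]
  simp only [if_pos rfl, mul_one]
  simp [mul_comm]

lemma sQ_eq (a : Fin n) (x : QvLat n) :
    sQ A a x = x - (∑ k, A k a * x k) • coroot a := by
  funext j
  simp only [sQ, coroot, Pi.sub_apply, Pi.smul_apply, smul_eq_mul]
  split_ifs with h
  · subst h; ring
  · ring

lemma sP_eq (a : Fin n) (lam : PLat n) :
    sP A a lam = lam - ((∑ k, A a k * lam.1 k) + lam.2 a) • alP a := by
  unfold sP alP
  ext j
  · simp only [Prod.fst_sub, Pi.sub_apply, Prod.smul_fst, Pi.smul_apply, smul_eq_mul]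
    split_ifs with h
    · subst h; ring
    · ring
  · simp [Prod.snd_sub]

lemma pairQP_sub_alP (x : QvLat n) (lam : PLat n) (c : ℤ) (a : Fin n) :
    pairQP A x (lam - c • alP a) = pairQP A x lam - c * pairQP A x (alP a) := by
  simp only [pairQP, alP, Prod.fst_sub, Prod.snd_sub, Prod.smul_fst, Prod.smul_snd,
    Pi.sub_apply, Pi.smul_apply, smul_eq_mul, smul_zero, Pi.zero_apply,
    mul_zero, add_zero, sub_zero, mul_add, Finset.mul_sum, Finset.sum_const_zero]
  rw [add_sub_right_comm]
  congr 1
  rw [← Finset.sum_sub_distrib]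
  apply Finset.sum_congr rfl; intro p _
  rw [← Finset.sum_sub_distrib]
  apply Finset.sum_congr rfl; intro q _
  ring

lemma pairQP_invariant (hA : ∀ i, A i i = 2) (a : Fin n) (x : QvLat n) (lam : PLat n) :
    pairQP A (sQ A a x) (sP A a lam) = pairQP A x lam := by
  have hc : pairQP A (coroot a) (alP a) = A a a := by
    rw [pairQP_alP]
    simp [coroot, Finset.sum_ite_eq', mul_comm]
  have hcl : pairQP A (coroot a) lam = (∑ k, A a k * lam.1 k) + lam.2 a := pairQP_coroot A a lam
  have hxa : pairQP A x (alP a) = ∑ k, A k a * x k := pairQP_alP A x a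
  rw [sQ_eq, sP_eq, pairQP_sub_left, pairQP_smul_left, pairQP_sub_alP, pairQP_sub_alP,
    hc, hcl, hxa, hA a]
  ring

end PairAlgebra
section Telescope
variable {n : ℕ} (A : Fin n → Fin n → ℤ) (ii : ℕ → Fin n)

lemma sQ_sub (a : Fin n) (x y : QvLat n) :
    sQ A a (x - y) = sQ A a x - sQ A a y := by
  funext j
  simp only [sQ, Pi.sub_apply]
  split_ifs with h
  · rw [Finset.sum_congr rfl (fun k _ => mul_sub (A k a) (x k) (y k)), Finset.sum_sub_distrib]
    ring
  · rfl

lemma sQ_smul (a : Fin n) (c : ℤ) (x : QvLat n) :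
    sQ A a (c • x) = c • sQ A a x := by
  funext j
  simp only [sQ, Pi.smul_apply, smul_eq_mul]
  split_ifs with h
  · rw [Finset.sum_congr rfl (fun k _ => by ring : ∀ k ∈ Finset.univ, A k a * (c * x k) = c * (A k a * x k)), ← Finset.mul_sum]
    ring
  · rfl

lemma wQ_sub (l : ℕ) (x y : QvLat n) :
    wQ A ii l (x - y) = wQ A ii l x - wQ A ii l y := by
  induction l generalizing x y with
  | zero => rfl
  | succ t ih => simp only [wQ, Function.comp_apply, sQ_sub, ih]

lemma wQ_smul (l : ℕ) (c : ℤ) (x : QvLat n) :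
    wQ A ii l (c • x) = c • wQ A ii l x := by
  induction l generalizing x with
  | zero => rfl
  | succ t ih => simp only [wQ, Function.comp_apply, sQ_smul, ih]

lemma wQ_sum {s : Finset ℕ} (l : ℕ) (f : ℕ → QvLat n) :
    wQ A ii l (∑ i ∈ s, f i) = ∑ i ∈ s, wQ A ii l (f i) := by
  classical
  induction s using Finset.induction_on with
  | empty =>
    have : wQ A ii l (0 : QvLat n) = 0 := by
      have h0 : (0 : QvLat n) = 0 - 0 := by simp
      rw [h0, wQ_sub]; simp
    simpa using this
  | @insert a s' h ih =>
    have hadd : ∀ x y : QvLat n, wQ A ii l (x + y) = wQ A ii l x + wQ A ii l y := by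
      intro x y
      have : x + y = x - (0 - y) := by abel
      rw [this, wQ_sub, wQ_sub]
      have h0 : wQ A ii l (0 : QvLat n) = 0 := by
        have h0' : (0 : QvLat n) = 0 - 0 := by simp
        rw [h0', wQ_sub]; simp
      rw [h0]; abel
    simp [Finset.sum_insert h, hadd, ih]

lemma wQ_zero (l : ℕ) : wQ A ii l (0 : QvLat n) = 0 := by
  have h0 : (0 : QvLat n) = 0 - 0 := by simp
  rw [h0, wQ_sub]; simp

lemma wQ_neg (l : ℕ) (x : QvLat n) : wQ A ii l (-x) = -wQ A ii l x := by
  have h0 : (-x) = 0 - x := by simp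
  rw [h0, wQ_sub, wQ_zero]; simp

lemma sQ_coroot (a : Fin n) (j : Fin n) :
    sQ A a (coroot j) = coroot j - (A j a) • coroot a := by
  funext p
  have hs : ∑ k, A k a * (if k = j then (1:ℤ) else 0) = A j a := by
    rw [Finset.sum_congr rfl (fun k _ => by rw [mul_ite, mul_one, mul_zero] :
        ∀ k ∈ Finset.univ, A k a * (if k = j then (1:ℤ) else 0) = if k = j then A k a else 0),
      Finset.sum_ite_eq' Finset.univ j (fun k => A k a)]
    simp
  by_cases h : p = a
  · subst h
    simp only [sQ, coroot, if_pos rfl, Pi.sub_apply, Pi.smul_apply, smul_eq_mul, hs, if_true]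
    ring
  · simp only [sQ, coroot, if_neg h, Pi.sub_apply, Pi.smul_apply, smul_eq_mul]
    ring

lemma wQP_invariant (hA : ∀ i, A i i = 2) (l : ℕ) (x : QvLat n) (lam : PLat n) :
    pairQP A (wQ A ii l x) (wP A ii l lam) = pairQP A x lam := by
  induction l generalizing x lam with
  | zero => rfl
  | succ t ih =>
    simp only [wQ, wP, Function.comp_apply]
    rw [ih, pairQP_invariant A hA]

/-- The coroot telescope: `w_t^∨ α_{i_k}^∨ = w_k^∨ α_{i_k}^∨ + ∑_{k<s≤t} a_{i_k i_s} w_s^∨ α_{i_s}^∨`. -/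
lemma wQ_coroot_telescope (hA : ∀ i, A i i = 2) (k t : ℕ) (h : k ≤ t) :
    wQ A ii t (coroot (ii k)) = wQ A ii k (coroot (ii k))
      + ∑ s ∈ Finset.Ioc k t, (A (ii k) (ii s)) • wQ A ii s (coroot (ii s)) := by
  induction t with
  | zero =>
    have : k = 0 := Nat.le_zero.mp h
    subst this; simp
  | succ t ih =>
    rcases Nat.lt_or_ge k (t+1) with hlt | hge
    · have hkt : k ≤ t := by omega
      have step : wQ A ii (t+1) (coroot (ii k))
          = wQ A ii t (coroot (ii k)) + (A (ii k) (ii (t+1))) • wQ A ii (t+1) (coroot (ii (t+1))) := by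
        have e1 : wQ A ii (t+1) (coroot (ii k)) = wQ A ii t (sQ A (ii (t+1)) (coroot (ii k))) := rfl
        have e2 : wQ A ii (t+1) (coroot (ii (t+1))) = wQ A ii t (sQ A (ii (t+1)) (coroot (ii (t+1)))) := rfl
        rw [e1, sQ_coroot, wQ_sub, wQ_smul, e2, sQ_coroot, wQ_sub, wQ_smul, hA (ii (t+1))]
        module
      rw [step, ih hkt, Finset.sum_Ioc_succ_top hkt]
      abel
    · have : k = t+1 := by omega
      subst this; simp

end Telescope
section KeyIdentity
variable {n : ℕ} (A : Fin n → Fin n → ℤ) (ii : ℕ → Fin n) (m : ℕ)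

/-- `P(s,t) = (w_s^∨ α_{i_s}^∨, w_t ω_{i_t})`. -/
def Pent (s t : ℕ) : ℤ :=
  pairQP A (wQ A ii s (coroot (ii s))) (wP A ii t (omP (ii t)))

/-- Truncated: `P̂(s,t) = [s ≤ t] P(s,t)`. -/
def P1 (s t : ℕ) : ℤ := if s ≤ t then Pent A ii s t else 0

/-- The `φ`-matrix entries (1-based). -/
noncomputable def U1 (k s : ℕ) : ℤ :=
  (if s = k then 1 else 0)
  + (if k < s ∧ s < kplus ii m k then A (ii k) (ii s) else 0)
  + (if s = kplus ii m k then 1 else 0)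

/-- Partial telescope for pairings: for `k ≤ t' `,
`P(k,t) + ∑_{k<s≤t'} a_{i_k i_s} P(s,t) = (w_{t'}^∨ α_{i_k}^∨, w_t ω_{i_t})`. -/
lemma pent_partial (hA : ∀ i, A i i = 2) (k t' t : ℕ) (h : k ≤ t') :
    Pent A ii k t + ∑ s ∈ Finset.Ioc k t', A (ii k) (ii s) * Pent A ii s t
      = pairQP A (wQ A ii t' (coroot (ii k))) (wP A ii t (omP (ii t))) := by
  rw [wQ_coroot_telescope A ii hA k t' h, pairQP_add_left, pairQP_sum_left]
  unfold Pent
  congr 1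
  apply Finset.sum_congr rfl; intro s _
  rw [pairQP_smul_left]

/-- The key identity `(U P̂)_{kt} = δ_{kt}` in scalar form. -/
lemma key_identity (hA : ∀ i, A i i = 2) {k t : ℕ}
    (hk1 : 1 ≤ k) (hk2 : k ≤ m) (ht1 : 1 ≤ t) (ht2 : t ≤ m) :
    ∑ s ∈ Finset.range m, U1 A ii m k (s+1) * P1 A ii (s+1) t
      = if k = t then 1 else 0 := by
  have hkp := kplus_gt ii m hk2
  set kp := kplus ii m k with hkpdef
  -- split the sum into three parts
  have split : ∀ s : ℕ, U1 A ii m k (s+1) * P1 A ii (s+1) t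
      = (if s+1 = k then P1 A ii (s+1) t else 0)
      + (if k < s+1 ∧ s+1 < kp then A (ii k) (ii (s+1)) * P1 A ii (s+1) t else 0)
      + (if s+1 = kp then P1 A ii (s+1) t else 0) := by
    intro s
    unfold U1
    rw [← hkpdef]
    split_ifs <;> ring
  rw [Finset.sum_congr rfl (fun s _ => split s)]
  rw [Finset.sum_add_distrib, Finset.sum_add_distrib]
  -- Part 1
  have part1 : ∑ s ∈ Finset.range m, (if s+1 = k then P1 A ii (s+1) t else 0)
      = P1 A ii k t := by
    rw [Finset.sum_congr rfl (fun s _ => by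
      simp only [show (s+1 = k) ↔ (s = k-1) from by omega] :
      ∀ s ∈ Finset.range m, (if s+1 = k then P1 A ii (s+1) t else 0)
        = if s = k-1 then P1 A ii (s+1) t else 0)]
    rw [Finset.sum_ite_eq' (Finset.range m) (k-1) (fun s => P1 A ii (s+1) t)]
    rw [if_pos (Finset.mem_range.mpr (by omega))]
    congr 1
    omega
  -- Part 3
  have part3 : ∑ s ∈ Finset.range m, (if s+1 = kp then P1 A ii (s+1) t else 0)
      = if kp ≤ m then P1 A ii kp t else 0 := by
    rw [Finset.sum_congr rfl (fun s _ => by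
      simp only [show (s+1 = kp) ↔ (s = kp-1) from by omega] :
      ∀ s ∈ Finset.range m, (if s+1 = kp then P1 A ii (s+1) t else 0)
        = if s = kp-1 then P1 A ii (s+1) t else 0)]
    rw [Finset.sum_ite_eq' (Finset.range m) (kp-1) (fun s => P1 A ii (s+1) t)]
    by_cases h : kp ≤ m
    · rw [if_pos (Finset.mem_range.mpr (by omega)), if_pos h]
      congr 1
      omega
    · rw [if_neg (by simp only [Finset.mem_range]; omega), if_neg h]
  -- Part 2
  have part2 : ∑ s ∈ Finset.range m,
        (if k < s+1 ∧ s+1 < kp then A (ii k) (ii (s+1)) * P1 A ii (s+1) t else 0)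
      = ∑ s ∈ Finset.Ioc k (min (kp-1) t), A (ii k) (ii s) * Pent A ii s t := by
    have e1 : ∀ s ∈ Finset.range m,
        (if k < s+1 ∧ s+1 < kp then A (ii k) (ii (s+1)) * P1 A ii (s+1) t else 0)
        = if s+1 ∈ Finset.Ioc k (min (kp-1) t) then A (ii k) (ii (s+1)) * Pent A ii (s+1) t else 0 := by
      intro s hs
      simp only [Finset.mem_Ioc, P1]
      split_ifs <;> first | ring1 | (exfalso; omega)
    rw [Finset.sum_congr rfl e1]
    have e2 : ∑ s ∈ Finset.range m,
          (if s+1 ∈ Finset.Ioc k (min (kp-1) t) then A (ii k) (ii (s+1)) * Pent A ii (s+1) t else 0)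
        = ∑ s ∈ Finset.Ico 1 (m+1),
          (if s ∈ Finset.Ioc k (min (kp-1) t) then A (ii k) (ii s) * Pent A ii s t else 0) := by
      rw [Finset.sum_Ico_eq_sum_range]
      simp only [add_tsub_cancel_right]
      apply Finset.sum_congr rfl; intro s _
      rw [add_comm 1 s]
    rw [e2, Finset.sum_ite_mem, Finset.inter_eq_right.mpr]
    intro x hx
    simp only [Finset.mem_Ioc] at hx
    simp only [Finset.mem_Ico]
    omega
  rw [part1, part2, part3]
  rcases lt_or_ge t k with hcase | hcase
  · -- t < k : everything vanishes
    rw [show P1 A ii k t = 0 from by unfold P1; rw [if_neg (by omega)]]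
    rw [Finset.Ioc_eq_empty (by omega), Finset.sum_empty]
    rw [show (if kp ≤ m then P1 A ii kp t else 0) = 0 from by
      unfold P1; split_ifs <;> first | rfl | omega]
    rw [if_neg (by omega)]
    ring
  · rcases lt_or_ge t kp with hc2 | hc2
    · -- k ≤ t < kp
      have hmin : min (kp-1) t = t := by omega
      rw [hmin, show P1 A ii k t = Pent A ii k t from by unfold P1; rw [if_pos hcase]]
      rw [show (if kp ≤ m then P1 A ii kp t else 0) = 0 from by
        unfold P1; split_ifs <;> first | rfl | omega]
      rw [add_zero, pent_partial A ii hA k t t hcase, wQP_invariant A ii hA,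
        pairQP_coroot_omP]
      by_cases he : k = t
      · subst he; simp
      · rw [if_neg he, if_neg (fun hi : ii k = ii t => by
          have := kplus_le ii m (show k < t by omega) ht2 hi.symm
          omega)]
    · -- kp ≤ t ≤ m
      have hkpm : kp ≤ m := le_trans hc2 ht2
      have hspec := kplus_spec ii m hkpm
      rw [← hkpdef] at hspec
      have hmin : min (kp-1) t = kp-1 := by omega
      rw [hmin, show P1 A ii k t = Pent A ii k t from by unfold P1; rw [if_pos hcase]]
      rw [show (if kp ≤ m then P1 A ii kp t else 0) = P1 A ii kp t from if_pos hkpm]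
      rw [show P1 A ii kp t = Pent A ii kp t from by unfold P1; rw [if_pos hc2]]
      rw [pent_partial A ii hA k (kp-1) t (by omega)]
      have hpent : Pent A ii kp t
          = -pairQP A (wQ A ii (kp-1) (coroot (ii k))) (wP A ii t (omP (ii t))) := by
        unfold Pent
        have hsucc : kp = (kp-1)+1 := by omega
        rw [hsucc]
        show pairQP A (wQ A ii (kp-1) (sQ A (ii ((kp-1)+1)) (coroot (ii ((kp-1)+1))))) _ = _
        rw [← hsucc, hspec.2, sQ_coroot, hA (ii k)]
        have : coroot (ii k) - (2:ℤ) • coroot (ii k) = -(coroot (ii k)) := by module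
        rw [this, wQ_neg, pairQP_neg_left]
      rw [hpent, if_neg (by omega)]
      ring

end KeyIdentity
section Matrices
variable {n : ℕ} (A : Fin n → Fin n → ℤ) (ii : ℕ → Fin n) (m : ℕ)

noncomputable def Umat : Matrix (Fin m) (Fin m) ℤ :=
  fun k s => U1 A ii m ((k:ℕ)+1) ((s:ℕ)+1)

def Pmat : Matrix (Fin m) (Fin m) ℤ :=
  fun s t => P1 A ii ((s:ℕ)+1) ((t:ℕ)+1)

lemma UP_one (hA : ∀ i, A i i = 2) : Umat A ii m * Pmat A ii m = 1 := by
  ext k t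
  rw [Matrix.mul_apply]
  have conv : ∑ s : Fin m, Umat A ii m k s * Pmat A ii m s t
      = ∑ s ∈ Finset.range m, U1 A ii m ((k:ℕ)+1) (s+1) * P1 A ii (s+1) ((t:ℕ)+1) :=
    Fin.sum_univ_eq_sum_range (fun s => U1 A ii m ((k:ℕ)+1) (s+1) * P1 A ii (s+1) ((t:ℕ)+1)) m
  rw [conv, key_identity A ii m hA (by omega) (by omega) (by omega) (by omega)]
  rw [Matrix.one_apply]
  by_cases h : k = t
  · rw [if_pos h, if_pos (by rw [h])]
  · rw [if_neg h, if_neg (fun e => h (Fin.ext (by omega)))]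

lemma PU_one (hA : ∀ i, A i i = 2) : Pmat A ii m * Umat A ii m = 1 :=
  mul_eq_one_comm.mp (UP_one A ii m hA)

lemma sum_smul_eps (c : Fin m → ℤ) (j : Fin m) :
    (∑ k : Fin m, c k • eps m ((k:ℕ)+1)) j = c j := by
  rw [Finset.sum_apply]
  have e : ∀ k : Fin m, (c k • eps m ((k:ℕ)+1)) j = if k = j then c k else 0 := by
    intro k
    simp only [Pi.smul_apply, smul_eq_mul, eps]
    by_cases h : k = j
    · rw [if_pos h, if_pos (by rw [h]), mul_one]
    · rw [if_neg h, if_neg (fun e => h (Fin.ext (by omega))), mul_zero]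
  rw [Finset.sum_congr rfl (fun k _ => e k), Finset.sum_ite_eq' Finset.univ j c,
    if_pos (Finset.mem_univ j)]

lemma phiE'_apply (l : ℕ) (j : Fin m) :
    phiE' A ii m l j = -(if (j:ℕ)+1 ≤ l then Pent A ii ((j:ℕ)+1) l else 0) := by
  unfold phiE'
  rw [Pi.neg_apply, sum_smul_eps]
  rfl

lemma phiMap'_eq (v : Fin m → ℤ) :
    phiMap' A ii m v = -((Pmat A ii m).mulVec v) := by
  funext j
  unfold phiMap'
  rw [Finset.sum_apply, Pi.neg_apply, Matrix.mulVec, dotProduct]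
  rw [← Finset.sum_neg_distrib]
  apply Finset.sum_congr rfl
  intro l _
  rw [Pi.smul_apply, smul_eq_mul, phiE'_apply]
  unfold Pmat P1
  ring

lemma mulVec_eps (M : Matrix (Fin m) (Fin m) ℤ) {k : ℕ} (h1 : 1 ≤ k) (h2 : k ≤ m)
    (p : Fin m) : M.mulVec (eps m k) p = M p ⟨k-1, by omega⟩ := by
  rw [Matrix.mulVec, dotProduct]
  have e : ∀ s : Fin m, M p s * eps m k s = if s = (⟨k-1, by omega⟩ : Fin m) then M p s else 0 := by
    intro s
    unfold eps
    by_cases h : s = (⟨k-1, by omega⟩ : Fin m)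
    · rw [if_pos h, if_pos (by rw [h]; simp; omega), mul_one]
    · rw [if_neg h, if_neg (fun e => h (Fin.ext (by simp at e ⊢; omega))), mul_zero]
  rw [Finset.sum_congr rfl (fun s _ => e s), Finset.sum_ite_eq' Finset.univ _ (fun s => M p s),
    if_pos (Finset.mem_univ _)]

end Matrices
section Bcoef
variable {n : ℕ} (A : Fin n → Fin n → ℤ) (ii : ℕ → Fin n) (m : ℕ)

lemma bcoef_eq_U1 {p k : ℕ} (hp1 : 1 ≤ p) (hp2 : p ≤ m) (hk1 : 1 ≤ k) (hk2 : k ≤ m)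
    (hkpm : kplus ii m k ≤ m) :
    bcoef A ii m p k = U1 A ii m p (kplus ii m k) - U1 A ii m p k := by
  have hkkp : k < kplus ii m k := (kplus_spec ii m hkpm).1
  have hiikp : ii (kplus ii m k) = ii k := (kplus_spec ii m hkpm).2
  have hppg : p < kplus ii m p := kplus_gt ii m hp2
  have hkml : kminus ii k < k := kminus_lt ii hk1
  have f1 : kplus ii m p = kplus ii m k ↔ p = k := by
    constructor
    · intro h
      have h2 : kminus ii (kplus ii m k) = p :=
        (kplus_eq_iff_kminus ii m hp1 (by omega) hkpm).mp h
      have h3 : kminus ii (kplus ii m k) = k := kminus_kplus ii m hk1 hkpm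
      omega
    · intro h; rw [h]
  have f2 : k = kplus ii m p ↔ p = kminus ii k := by
    constructor
    · intro h
      exact ((kplus_eq_iff_kminus ii m hp1 hk1 hk2).mp h.symm).symm
    · intro h
      exact ((kplus_eq_iff_kminus ii m hp1 hk1 hk2).mpr h.symm).symm
  unfold bcoef U1
  rw [hiikp]
  split_ifs <;> first | ring1 | omega

end Bcoef
section Rho
variable {n : ℕ} (A : Fin n → Fin n → ℤ) (ii : ℕ → Fin n) (m : ℕ)

lemma rhoPE_apply (k : ℕ) (p : Fin m) :
    rhoPE A ii m k p = (if (p:ℕ)+1 = k then 1 else 0)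
      + (if (p:ℕ)+1 < k ∧ kplus ii m ((p:ℕ)+1) = m+1 then A (ii ((p:ℕ)+1)) (ii k) else 0) := by
  unfold rhoPE
  rw [Pi.add_apply, sum_smul_eps]
  rfl

lemma rhoME_apply (k : ℕ) (p : Fin m) :
    rhoME A ii m k p = (if (p:ℕ)+1 = k then 1 else 0)
      - (if (p:ℕ)+1 ≤ k ∧ kplus ii m ((p:ℕ)+1) = m+1 then A (ii ((p:ℕ)+1)) (ii k) else 0) := by
  unfold rhoME
  rw [Pi.sub_apply, sum_smul_eps]
  rfl

lemma rhoPMap_apply (v : Fin m → ℤ) (p : Fin m) :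
    rhoPMap A ii m v p = v p + ∑ t : Fin m, v t *
      (if (p:ℕ) < (t:ℕ) ∧ kplus ii m ((p:ℕ)+1) = m+1
        then A (ii ((p:ℕ)+1)) (ii ((t:ℕ)+1)) else 0) := by
  unfold rhoPMap
  rw [Finset.sum_apply]
  have e : ∀ t : Fin m, (v t • rhoPE A ii m ((t:ℕ)+1)) p
      = (if t = p then v t else 0) + v t *
        (if (p:ℕ) < (t:ℕ) ∧ kplus ii m ((p:ℕ)+1) = m+1
          then A (ii ((p:ℕ)+1)) (ii ((t:ℕ)+1)) else 0) := by
    intro t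
    rw [Pi.smul_apply, smul_eq_mul, rhoPE_apply, mul_add]
    congr 1
    · by_cases h : t = p
      · rw [if_pos h, if_pos (by rw [h]), mul_one]
      · rw [if_neg h, if_neg (fun e => h (Fin.ext (by omega))), mul_zero]
    · congr 1
      by_cases h : (p:ℕ) < (t:ℕ) ∧ kplus ii m ((p:ℕ)+1) = m+1
      · rw [if_pos (by omega : (p:ℕ)+1 < (t:ℕ)+1 ∧ kplus ii m ((p:ℕ)+1) = m+1), if_pos h]
      · rw [if_neg (by omega : ¬((p:ℕ)+1 < (t:ℕ)+1 ∧ kplus ii m ((p:ℕ)+1) = m+1)), if_neg h]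
  rw [Finset.sum_congr rfl (fun t _ => e t), Finset.sum_add_distrib,
    Finset.sum_ite_eq' Finset.univ p v, if_pos (Finset.mem_univ p)]

lemma rhoMMap_apply (v : Fin m → ℤ) (p : Fin m) :
    rhoMMap A ii m v p = v p - ∑ t : Fin m, v t *
      (if (p:ℕ) ≤ (t:ℕ) ∧ kplus ii m ((p:ℕ)+1) = m+1
        then A (ii ((p:ℕ)+1)) (ii ((t:ℕ)+1)) else 0) := by
  unfold rhoMMap
  rw [Finset.sum_apply]
  have e : ∀ t : Fin m, (v t • rhoME A ii m ((t:ℕ)+1)) p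
      = (if t = p then v t else 0) - v t *
        (if (p:ℕ) ≤ (t:ℕ) ∧ kplus ii m ((p:ℕ)+1) = m+1
          then A (ii ((p:ℕ)+1)) (ii ((t:ℕ)+1)) else 0) := by
    intro t
    rw [Pi.smul_apply, smul_eq_mul, rhoME_apply, mul_sub]
    congr 1
    · by_cases h : t = p
      · rw [if_pos h, if_pos (by rw [h]), mul_one]
      · rw [if_neg h, if_neg (fun e => h (Fin.ext (by omega))), mul_zero]
    · congr 1
      by_cases h : (p:ℕ) ≤ (t:ℕ) ∧ kplus ii m ((p:ℕ)+1) = m+1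
      · rw [if_pos (by omega : (p:ℕ)+1 ≤ (t:ℕ)+1 ∧ kplus ii m ((p:ℕ)+1) = m+1), if_pos h]
      · rw [if_neg (by omega : ¬((p:ℕ)+1 ≤ (t:ℕ)+1 ∧ kplus ii m ((p:ℕ)+1) = m+1)), if_neg h]
  rw [Finset.sum_congr rfl (fun t _ => e t), Finset.sum_sub_distrib,
    Finset.sum_ite_eq' Finset.univ p v, if_pos (Finset.mem_univ p)]

end Rho
section Restore
variable {n : ℕ} (A : Fin n → Fin n → ℤ) (ii : ℕ → Fin n) (m : ℕ)

lemma k_le_of_kplus_le {k : ℕ} (h : kplus ii m k ≤ m) : k ≤ m := by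
  rcases kplus_mem ii m k with hh | hh
  · simp only [Set.mem_setOf_eq] at hh; omega
  · simp only [Set.mem_singleton_iff] at hh; omega

lemma bcoef_frozen {q k : ℕ} (hfroz : kplus ii m q = m+1)
    (hk1 : 1 ≤ k) (hkpm : kplus ii m k ≤ m) (hkq : k < q) :
    bcoef A ii m q k = (if q = kplus ii m k then 1 else 0)
      + (if q < kplus ii m k then A (ii q) (ii k) else 0) := by
  have hkml : kminus ii k < k := kminus_lt ii hk1
  unfold bcoef
  split_ifs <;> first | ring1 | omega

lemma rho_restore (hA : ∀ i, A i i = 2) (r : ℕ)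
    (hex : ∀ q, 1 ≤ q → q ≤ m → (kplus ii m q ≤ m ↔ q ≤ m - r))
    {k : ℕ} (hk1 : 1 ≤ k) (hk2 : kplus ii m k ≤ m) :
    rhoPMap A ii m (bvecP A ii m k) = (fun p : Fin m => bcoef A ii m ((p:ℕ)+1) k)
    ∧ rhoMMap A ii m (bvecM A ii m k) = (fun p : Fin m => bcoef A ii m ((p:ℕ)+1) k) := by
  have hkm : k ≤ m := k_le_of_kplus_le ii m hk2
  have hkkp : k < kplus ii m k := (kplus_spec ii m hk2).1
  have hiikp : ii (kplus ii m k) = ii k := (kplus_spec ii m hk2).2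
  have hexk : k ≤ m - r := (hex k hk1 hkm).mp hk2
  have hkm1 : kminus ii k < k := kminus_lt ii hk1
  -- the Fin index corresponding to kp
  have hkpidx : kplus ii m k - 1 < m := by omega
  set kp := kplus ii m k with hkp
  set tkp : Fin m := ⟨kp - 1, hkpidx⟩ with htkp
  have htkp1 : (tkp:ℕ)+1 = kp := by simp [htkp]; omega
  have hdelta : deltaEx ii m kp = if kplus ii m kp ≤ m then 0 else 1 := by
    unfold deltaEx
    by_cases h : kplus ii m kp ≤ m
    · rw [if_pos ⟨by omega, h⟩, if_pos h]
    · rw [if_neg (by omega), if_neg h]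
  have hepskp : ∀ t : Fin m, eps m kp t = if t = tkp then 1 else 0 := by
    intro t
    unfold eps
    by_cases h : t = tkp
    · rw [if_pos (by rw [h]; omega), if_pos h]
    · rw [if_neg (fun e => h (Fin.ext (by omega))), if_neg h]
  constructor
  · funext p
    rw [rhoPMap_apply]
    by_cases hq : kplus ii m ((p:ℕ)+1) ≤ m
    · -- p+1 is exchangeable: correction sum vanishes
      have hsum : ∑ t : Fin m, bvecP A ii m k t *
          (if (p:ℕ) < (t:ℕ) ∧ kplus ii m ((p:ℕ)+1) = m+1
            then A (ii ((p:ℕ)+1)) (ii ((t:ℕ)+1)) else 0) = 0 := by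
        apply Finset.sum_eq_zero
        intro t _
        rw [if_neg (by omega), mul_zero]
      rw [hsum, add_zero]
      unfold bvecP
      rw [Pi.add_apply, Pi.smul_apply, smul_eq_mul, if_pos hq, hepskp p, hdelta]
      by_cases hpk : p = tkp
      · have : kplus ii m kp ≤ m := by
          have : (p:ℕ)+1 = kp := by rw [hpk]; exact htkp1
          rwa [this] at hq
        rw [if_pos this, if_pos hpk]; ring
      · rw [if_neg hpk]; ring
    · -- p+1 is frozen
      have hfroz : kplus ii m ((p:ℕ)+1) = m+1 := by
        have := kplus_le_succ ii m ((p:ℕ)+1)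
        omega
      have hqgt : m - r < (p:ℕ)+1 := by
        by_contra hcon
        exact hq ((hex ((p:ℕ)+1) (by omega) (by omega)).mpr (by omega))
      -- the bcoef part of the sum vanishes; only the delta part survives
      have hsum : ∑ t : Fin m, bvecP A ii m k t *
          (if (p:ℕ) < (t:ℕ) ∧ kplus ii m ((p:ℕ)+1) = m+1
            then A (ii ((p:ℕ)+1)) (ii ((t:ℕ)+1)) else 0)
          = deltaEx ii m kp * (if (p:ℕ) < (tkp:ℕ)
            then A (ii ((p:ℕ)+1)) (ii k) else 0) := by
        have e : ∀ t : Fin m, bvecP A ii m k t *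
            (if (p:ℕ) < (t:ℕ) ∧ kplus ii m ((p:ℕ)+1) = m+1
              then A (ii ((p:ℕ)+1)) (ii ((t:ℕ)+1)) else 0)
            = if t = tkp then deltaEx ii m kp * (if (p:ℕ) < (tkp:ℕ)
                then A (ii ((p:ℕ)+1)) (ii k) else 0) else 0 := by
          intro t
          unfold bvecP
          rw [Pi.add_apply, Pi.smul_apply, smul_eq_mul, hepskp t]
          by_cases ht : t = tkp
          · subst ht
            rw [if_pos rfl, if_pos rfl, mul_one, htkp1, hiikp]
            by_cases hkpex : kplus ii m kp ≤ m
            · have hle : kp ≤ m - r := (hex kp (by omega) (by omega)).mp hkpex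
              have hnlt : ¬ ((p:ℕ) < (tkp:ℕ)) := by omega
              rw [if_neg (show ¬((p:ℕ) < (tkp:ℕ) ∧ kplus ii m ((p:ℕ)+1) = m+1) from by omega),
                if_neg hnlt, mul_zero, mul_zero]
            · have hd0 : deltaEx ii m kp = 1 := by rw [hdelta, if_neg hkpex]
              rw [if_neg hkpex, hd0]
              by_cases hc : (p:ℕ) < (tkp:ℕ)
              · rw [if_pos ⟨hc, hfroz⟩, if_pos hc]; ring
              · rw [if_neg (by omega), if_neg hc]; ring
          · rw [if_neg ht, if_neg ht]
            by_cases hc : (p:ℕ) < (t:ℕ) ∧ kplus ii m ((p:ℕ)+1) = m+1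
            · rw [if_pos hc]
              have hbz : (if kplus ii m ((t:ℕ)+1) ≤ m then bcoef A ii m ((t:ℕ)+1) k else 0) = 0 := by
                by_cases hte : kplus ii m ((t:ℕ)+1) ≤ m
                · exfalso
                  have : (t:ℕ)+1 ≤ m - r := (hex ((t:ℕ)+1) (by omega) (by omega)).mp hte
                  omega
                · rw [if_neg hte]
              rw [hbz]
              ring
            · rw [if_neg hc]; ring
        rw [Finset.sum_congr rfl (fun t _ => e t),
          Finset.sum_ite_eq' Finset.univ tkp, if_pos (Finset.mem_univ tkp)]
      rw [hsum]
      unfold bvecP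
      rw [Pi.add_apply, Pi.smul_apply, smul_eq_mul, if_neg hq, hepskp p, zero_add]
      -- goal: δ*[p=tkp] + δ*[p<tkp]A = bcoef (p+1) k
      rw [bcoef_frozen A ii m hfroz hk1 hk2 (by omega), hdelta]
      by_cases hkpex : kplus ii m kp ≤ m
      · have hle2 : kp ≤ m - r := (hex kp (by omega) (by omega)).mp hkpex
        rw [if_pos hkpex,
          if_neg (show ¬((p:ℕ)+1 = kplus ii m k) from by omega),
          if_neg (show ¬((p:ℕ)+1 < kplus ii m k) from by omega)]
        ring
      · rw [if_neg hkpex]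
        by_cases hpe : p = tkp
        · have hq1 : (p:ℕ)+1 = kplus ii m k := by rw [hpe]; omega
          rw [if_pos hpe, if_pos hq1,
            if_neg (show ¬((p:ℕ) < (tkp:ℕ)) from by rw [hpe]; omega),
            if_neg (show ¬((p:ℕ)+1 < kplus ii m k) from by omega)]
          ring
        · have hne : ¬((p:ℕ)+1 = kplus ii m k) := fun e => hpe (Fin.ext (by omega))
          rw [if_neg hpe, if_neg hne]
          by_cases hlt : (p:ℕ) < (tkp:ℕ)
          · rw [if_pos hlt, if_pos (show (p:ℕ)+1 < kplus ii m k from by omega)]; ring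
          · rw [if_neg hlt, if_neg (show ¬((p:ℕ)+1 < kplus ii m k) from by omega)]; ring
  · funext p
    rw [rhoMMap_apply]
    by_cases hq : kplus ii m ((p:ℕ)+1) ≤ m
    · have hsum : ∑ t : Fin m, bvecM A ii m k t *
          (if (p:ℕ) ≤ (t:ℕ) ∧ kplus ii m ((p:ℕ)+1) = m+1
            then A (ii ((p:ℕ)+1)) (ii ((t:ℕ)+1)) else 0) = 0 := by
        apply Finset.sum_eq_zero
        intro t _
        rw [if_neg (by omega), mul_zero]
      rw [hsum, sub_zero]
      unfold bvecM
      rw [Pi.sub_apply, Pi.smul_apply, smul_eq_mul, if_pos hq, hepskp p, hdelta]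
      by_cases hpk : p = tkp
      · have : kplus ii m kp ≤ m := by
          have : (p:ℕ)+1 = kp := by rw [hpk]; exact htkp1
          rwa [this] at hq
        rw [if_pos this, if_pos hpk]; ring
      · rw [if_neg hpk]; ring
    · have hfroz : kplus ii m ((p:ℕ)+1) = m+1 := by
        have := kplus_le_succ ii m ((p:ℕ)+1)
        omega
      have hqgt : m - r < (p:ℕ)+1 := by
        by_contra hcon
        exact hq ((hex ((p:ℕ)+1) (by omega) (by omega)).mpr (by omega))
      have hsum : ∑ t : Fin m, bvecM A ii m k t *
          (if (p:ℕ) ≤ (t:ℕ) ∧ kplus ii m ((p:ℕ)+1) = m+1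
            then A (ii ((p:ℕ)+1)) (ii ((t:ℕ)+1)) else 0)
          = -(deltaEx ii m kp * (if (p:ℕ) ≤ (tkp:ℕ)
            then A (ii ((p:ℕ)+1)) (ii k) else 0)) := by
        have e : ∀ t : Fin m, bvecM A ii m k t *
            (if (p:ℕ) ≤ (t:ℕ) ∧ kplus ii m ((p:ℕ)+1) = m+1
              then A (ii ((p:ℕ)+1)) (ii ((t:ℕ)+1)) else 0)
            = if t = tkp then -(deltaEx ii m kp * (if (p:ℕ) ≤ (tkp:ℕ)
                then A (ii ((p:ℕ)+1)) (ii k) else 0)) else 0 := by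
          intro t
          unfold bvecM
          rw [Pi.sub_apply, Pi.smul_apply, smul_eq_mul, hepskp t]
          by_cases ht : t = tkp
          · subst ht
            rw [if_pos rfl, if_pos rfl, mul_one, htkp1, hiikp]
            by_cases hkpex : kplus ii m kp ≤ m
            · have hle : kp ≤ m - r := (hex kp (by omega) (by omega)).mp hkpex
              have hnlt : ¬ ((p:ℕ) ≤ (tkp:ℕ)) := by omega
              rw [if_neg (show ¬((p:ℕ) ≤ (tkp:ℕ) ∧ kplus ii m ((p:ℕ)+1) = m+1) from by omega),
                if_neg hnlt, mul_zero, mul_zero, neg_zero]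
            · have hd0 : deltaEx ii m kp = 1 := by rw [hdelta, if_neg hkpex]
              rw [if_neg hkpex, hd0]
              by_cases hc : (p:ℕ) ≤ (tkp:ℕ)
              · rw [if_pos ⟨hc, hfroz⟩, if_pos hc]; ring
              · rw [if_neg (by omega), if_neg hc]; ring
          · rw [if_neg ht, if_neg ht]
            by_cases hc : (p:ℕ) ≤ (t:ℕ) ∧ kplus ii m ((p:ℕ)+1) = m+1
            · rw [if_pos hc]
              have hbz : (if kplus ii m ((t:ℕ)+1) ≤ m then bcoef A ii m ((t:ℕ)+1) k else 0) = 0 := by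
                by_cases hte : kplus ii m ((t:ℕ)+1) ≤ m
                · exfalso
                  have : (t:ℕ)+1 ≤ m - r := (hex ((t:ℕ)+1) (by omega) (by omega)).mp hte
                  omega
                · rw [if_neg hte]
              rw [hbz]
              ring
            · rw [if_neg hc]; ring
        rw [Finset.sum_congr rfl (fun t _ => e t),
          Finset.sum_ite_eq' Finset.univ tkp, if_pos (Finset.mem_univ tkp)]
      rw [hsum]
      unfold bvecM
      rw [Pi.sub_apply, Pi.smul_apply, smul_eq_mul, if_neg hq, hepskp p, zero_sub]
      rw [bcoef_frozen A ii m hfroz hk1 hk2 (by omega), hdelta]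
      by_cases hkpex : kplus ii m kp ≤ m
      · have hle2 : kp ≤ m - r := (hex kp (by omega) (by omega)).mp hkpex
        rw [if_pos hkpex,
          if_neg (show ¬((p:ℕ)+1 = kplus ii m k) from by omega),
          if_neg (show ¬((p:ℕ)+1 < kplus ii m k) from by omega)]
        ring
      · rw [if_neg hkpex]
        by_cases hpe : p = tkp
        · have hq1 : (p:ℕ)+1 = kplus ii m k := by rw [hpe]; omega
          have hiiq : ii ((p:ℕ)+1) = ii k := by rw [hq1]; exact hiikp
          rw [if_pos hpe, if_pos hq1,
            if_pos (show (p:ℕ) ≤ (tkp:ℕ) from by rw [hpe]),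
            if_neg (show ¬((p:ℕ)+1 < kplus ii m k) from by omega), hiiq, hA (ii k)]
          ring
        · have hne : ¬((p:ℕ)+1 = kplus ii m k) := fun e => hpe (Fin.ext (by omega))
          rw [if_neg hpe, if_neg hne]
          by_cases hlt : (p:ℕ) ≤ (tkp:ℕ)
          · rw [if_pos hlt, if_pos (show (p:ℕ)+1 < kplus ii m k from by omega)]; ring
          · rw [if_neg hlt, if_neg (show ¬((p:ℕ)+1 < kplus ii m k) from by omega)]; ring

end Restore
section Final
variable {n : ℕ} (A : Fin n → Fin n → ℤ) (d : Fin n → ℤ) (ii : ℕ → Fin n) (m : ℕ)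

lemma row_entry (hA : ∀ i, A i i = 2) {k : ℕ} (hk1 : 1 ≤ k) (hkpm : kplus ii m k ≤ m)
    {q : ℕ} (hq1 : 1 ≤ q) :
    ((k:ℤ) - (q:ℤ)).sign * (d (ii k) * A (ii k) (ii q))
      - ((kplus ii m k:ℤ) - (q:ℤ)).sign * (d (ii (kplus ii m k)) * A (ii (kplus ii m k)) (ii q))
    = -2 * d (ii k) * U1 A ii m k q := by
  have hkm : k ≤ m := k_le_of_kplus_le ii m hkpm
  have hkkp : k < kplus ii m k := (kplus_spec ii m hkpm).1
  have hii : ii (kplus ii m k) = ii k := (kplus_spec ii m hkpm).2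
  unfold U1
  rw [hii]
  by_cases h1 : q < k
  · rw [Int.sign_eq_one_iff_pos.mpr (by omega : (0:ℤ) < (k:ℤ) - (q:ℤ)),
      Int.sign_eq_one_iff_pos.mpr (by omega : (0:ℤ) < (kplus ii m k:ℤ) - (q:ℤ)),
      if_neg (by omega), if_neg (by omega), if_neg (by omega)]
    ring
  · by_cases h2 : q = k
    · subst h2
      rw [show ((q:ℤ) - (q:ℤ)) = 0 from by ring, Int.sign_zero,
        Int.sign_eq_one_iff_pos.mpr (by omega : (0:ℤ) < (kplus ii m q:ℤ) - (q:ℤ)),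
        if_pos rfl, if_neg (by omega), if_neg (by omega), hA (ii q)]
      ring
    · by_cases h3 : q < kplus ii m k
      · rw [Int.sign_eq_neg_one_iff_neg.mpr (by omega : ((k:ℤ) - (q:ℤ)) < 0),
          Int.sign_eq_one_iff_pos.mpr (by omega : (0:ℤ) < (kplus ii m k:ℤ) - (q:ℤ)),
          if_neg (by omega), if_pos (by omega), if_neg (by omega)]
        ring
      · by_cases h4 : q = kplus ii m k
        · rw [Int.sign_eq_neg_one_iff_neg.mpr (by omega : ((k:ℤ) - (q:ℤ)) < 0),
            show ((kplus ii m k:ℤ) - (q:ℤ)) = 0 from by rw [h4]; ring, Int.sign_zero,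
            if_neg (by omega), if_neg (by omega), if_pos h4, h4, hii, hA (ii k)]
          ring
        · rw [Int.sign_eq_neg_one_iff_neg.mpr (by omega : ((k:ℤ) - (q:ℤ)) < 0),
            Int.sign_eq_neg_one_iff_neg.mpr (by omega : ((kplus ii m k:ℤ) - (q:ℤ)) < 0),
            if_neg (by omega), if_neg (by omega), if_neg (by omega)]
          ring

lemma lam_key (hA : ∀ i, A i i = 2) {k : ℕ} (hk1 : 1 ≤ k) (hkm : k ≤ m)
    (hkpm : kplus ii m k ≤ m) (w : Fin m → ℤ) :
    LamF A d ii m (eps m k - eps m (kplus ii m k)) (phiMap' A ii m w)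
      = 2 * d (ii k) * w ⟨k-1, by omega⟩ := by
  have hkkp : k < kplus ii m k := (kplus_spec ii m hkpm).1
  set kp := kplus ii m k with hkp
  set ki : Fin m := ⟨k-1, by omega⟩ with hki
  set kpi : Fin m := ⟨kp-1, by omega⟩ with hkpi
  have hki1 : (ki:ℕ)+1 = k := by simp only [hki]; omega
  have hkpi1 : (kpi:ℕ)+1 = kp := by simp only [hkpi]; omega
  have haeval : ∀ k0 : Fin m, (eps m k - eps m kp) k0
      = (if k0 = ki then 1 else 0) - (if k0 = kpi then 1 else 0) := by
    intro k0
    rw [Pi.sub_apply]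
    unfold eps
    congr 1
    · by_cases h : k0 = ki
      · rw [if_pos (by rw [h]; omega), if_pos h]
      · rw [if_neg (fun e => h (Fin.ext (by omega))), if_neg h]
    · by_cases h : k0 = kpi
      · rw [if_pos (by rw [h]; omega), if_pos h]
      · rw [if_neg (fun e => h (Fin.ext (by omega))), if_neg h]
  have col : ∀ (F : Fin m → ℤ),
      (∑ k0 : Fin m, (eps m k - eps m kp) k0 * F k0) = F ki - F kpi := by
    intro F
    have e : ∀ k0 ∈ Finset.univ, (eps m k - eps m kp) k0 * F k0
        = (if k0 = ki then F k0 else 0) - (if k0 = kpi then F k0 else 0) := by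
      intro k0 _
      rw [haeval k0]
      split_ifs <;> ring
    rw [Finset.sum_congr rfl e, Finset.sum_sub_distrib,
      Finset.sum_ite_eq' Finset.univ ki F, Finset.sum_ite_eq' Finset.univ kpi F,
      if_pos (Finset.mem_univ _), if_pos (Finset.mem_univ _)]
  set G : Fin m → ℤ := fun k0 => ∑ l : Fin m, phiMap' A ii m w l *
    ((((k0:ℕ):ℤ) - ((l:ℕ):ℤ)).sign * (d (ii ((k0:ℕ)+1)) * A (ii ((k0:ℕ)+1)) (ii ((l:ℕ)+1)))) with hG
  have shape : LamF A d ii m (eps m k - eps m kp) (phiMap' A ii m w)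
      = ∑ k0 : Fin m, (eps m k - eps m kp) k0 * G k0 := by
    unfold LamF
    apply Finset.sum_congr rfl; intro k0 _
    rw [hG, Finset.mul_sum]
    apply Finset.sum_congr rfl; intro l _
    ring
  rw [shape, col G, hG]
  rw [← Finset.sum_sub_distrib]
  have rowe : ∀ l ∈ Finset.univ,
      phiMap' A ii m w l * ((((ki:ℕ):ℤ) - ((l:ℕ):ℤ)).sign * (d (ii ((ki:ℕ)+1)) * A (ii ((ki:ℕ)+1)) (ii ((l:ℕ)+1))))
      - phiMap' A ii m w l * ((((kpi:ℕ):ℤ) - ((l:ℕ):ℤ)).sign * (d (ii ((kpi:ℕ)+1)) * A (ii ((kpi:ℕ)+1)) (ii ((l:ℕ)+1))))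
      = (-2 * d (ii k)) * (Umat A ii m ki l * phiMap' A ii m w l) := by
    intro l _
    have c1 : (((ki:ℕ):ℤ) - ((l:ℕ):ℤ)).sign = ((k:ℤ) - (((l:ℕ)+1 : ℕ):ℤ)).sign := by
      congr 1; push_cast; omega
    have c2 : (((kpi:ℕ):ℤ) - ((l:ℕ):ℤ)).sign = ((kp:ℤ) - (((l:ℕ)+1 : ℕ):ℤ)).sign := by
      congr 1; push_cast; omega
    rw [c1, c2, hki1, hkpi1, ← mul_sub]
    rw [show Umat A ii m ki l = U1 A ii m ((ki:ℕ)+1) ((l:ℕ)+1) from rfl, hki1]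
    rw [row_entry A d ii m hA hk1 hkpm (by omega : 1 ≤ (l:ℕ)+1)]
    ring
  rw [Finset.sum_congr rfl rowe, ← Finset.mul_sum]
  have hUP : ∑ l : Fin m, Umat A ii m ki l * phiMap' A ii m w l = -(w ki) := by
    rw [phiMap'_eq]
    have e0 : ∑ l : Fin m, Umat A ii m ki l * (-((Pmat A ii m).mulVec w)) l
        = ((Umat A ii m).mulVec (-((Pmat A ii m).mulVec w))) ki := rfl
    rw [e0, Matrix.mulVec_neg, Matrix.mulVec_mulVec, UP_one A ii m hA, Matrix.one_mulVec,
      Pi.neg_apply]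
  rw [hUP]
  ring

lemma rho_eps_evalP (l k : ℕ) (hk2 : kplus ii m k ≤ m) (pk : Fin m)
    (hpk : (pk:ℕ)+1 = k) :
    rhoPMap A ii m (eps m l) pk = if k = l then 1 else 0 := by
  rw [rhoPMap_apply]
  simp only [hpk]
  rw [Finset.sum_eq_zero (fun t _ => by rw [if_neg (by omega), mul_zero] :
    ∀ t ∈ Finset.univ, eps m l t * (if (pk:ℕ) < (t:ℕ) ∧ kplus ii m k = m+1
      then A (ii k) (ii ((t:ℕ)+1)) else 0) = 0), add_zero]
  unfold eps
  simp only [hpk]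

lemma rho_eps_evalM (l k : ℕ) (hk2 : kplus ii m k ≤ m) (pk : Fin m)
    (hpk : (pk:ℕ)+1 = k) :
    rhoMMap A ii m (eps m l) pk = if k = l then 1 else 0 := by
  rw [rhoMMap_apply]
  simp only [hpk]
  rw [Finset.sum_eq_zero (fun t _ => by rw [if_neg (by omega), mul_zero] :
    ∀ t ∈ Finset.univ, eps m l t * (if (pk:ℕ) ≤ (t:ℕ) ∧ kplus ii m k = m+1
      then A (ii k) (ii ((t:ℕ)+1)) else 0) = 0), sub_zero]
  unfold eps
  simp only [hpk]

end Final
/-- compatibility for the truncated columns twisted by `ρ_𝐢^±`,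
assuming `𝐞𝐱 = {1,…,m-r}` where `r = #{k ∈ [1,m] : k⁺ = m+1}`. -/
theorem Lambda_compat_rho {n m : ℕ} (hm : 1 ≤ m)
    (A : Fin n → Fin n → ℤ) (d : Fin n → ℤ)
    (hA : ∀ i, A i i = 2) (hd : ∀ i, 0 < d i)
    (hsym : ∀ i j, d i * A i j = d j * A j i)
    (ii : ℕ → Fin n)
    (r : ℕ) (hr : r = Set.ncard {k : ℕ | 1 ≤ k ∧ k ≤ m ∧ kplus ii m k = m + 1})
    (hex : ∀ k, 1 ≤ k → k ≤ m → (kplus ii m k ≤ m ↔ k ≤ m - r))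
    (k : ℕ) (hk1 : 1 ≤ k) (hk2 : kplus ii m k ≤ m)
    (l : ℕ) (hl1 : 1 ≤ l) (hl2 : l ≤ m) :
    LamF A d ii m (phiMap' A ii m (rhoPMap A ii m (bvecP A ii m k)))
        (phiMap' A ii m (rhoPMap A ii m (eps m l))) =
      2 * d (ii k) * (if k = l then 1 else 0) ∧
    LamF A d ii m (phiMap' A ii m (rhoMMap A ii m (bvecM A ii m k)))
        (phiMap' A ii m (rhoMMap A ii m (eps m l))) =
      2 * d (ii k) * (if k = l then 1 else 0) := by
  have hkm : k ≤ m := k_le_of_kplus_le ii m hk2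
  have hkkp : k < kplus ii m k := (kplus_spec ii m hk2).1
  have hkp1 : 1 ≤ kplus ii m k := by omega
  obtain ⟨hresP, hresM⟩ := rho_restore A ii m hA r hex hk1 hk2
  have hb : (fun p : Fin m => bcoef A ii m ((p:ℕ)+1) k)
      = (Umat A ii m).mulVec (eps m (kplus ii m k) - eps m k) := by
    funext p
    rw [Matrix.mulVec_sub, Pi.sub_apply,
      mulVec_eps m ((Umat A ii m)) hkp1 hk2 p,
      mulVec_eps m ((Umat A ii m)) hk1 hkm p,
      bcoef_eq_U1 A ii m (by omega) (by omega) hk1 hkm hk2]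
    have e1 : Umat A ii m p ⟨kplus ii m k - 1, by omega⟩
        = U1 A ii m ((p:ℕ)+1) (kplus ii m k) := by
      show U1 A ii m ((p:ℕ)+1) (((⟨kplus ii m k - 1, by omega⟩ : Fin m):ℕ)+1) = _
      congr 1
      show kplus ii m k - 1 + 1 = kplus ii m k
      omega
    have e2 : Umat A ii m p ⟨k - 1, by omega⟩ = U1 A ii m ((p:ℕ)+1) k := by
      show U1 A ii m ((p:ℕ)+1) (((⟨k - 1, by omega⟩ : Fin m):ℕ)+1) = _
      congr 1
      show k - 1 + 1 = k
      omega
    rw [e1, e2]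
  have hphiP : phiMap' A ii m (rhoPMap A ii m (bvecP A ii m k))
      = eps m k - eps m (kplus ii m k) := by
    rw [hresP, hb, phiMap'_eq, Matrix.mulVec_mulVec, PU_one A ii m hA,
      Matrix.one_mulVec, neg_sub]
  have hphiM : phiMap' A ii m (rhoMMap A ii m (bvecM A ii m k))
      = eps m k - eps m (kplus ii m k) := by
    rw [hresM, hb, phiMap'_eq, Matrix.mulVec_mulVec, PU_one A ii m hA,
      Matrix.one_mulVec, neg_sub]
  constructor
  · rw [hphiP, lam_key A d ii m hA hk1 hkm hk2 (rhoPMap A ii m (eps m l))]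
    congr 1
    exact rho_eps_evalP A ii m l k hk2 _ (by show k - 1 + 1 = k; omega)
  · rw [hphiM, lam_key A d ii m hA hk1 hkm hk2 (rhoMMap A ii m (eps m l))]
    congr 1
    exact rho_eps_evalM A ii m l k hk2 _ (by show k - 1 + 1 = k; omega)
end

section
/- If $\ell\in\{1,\dots,m\}$ satisfies $\ell^+=m+1$ (i.e. $i_\ell$ does not occur in $\mathbf{i}$ after position $\ell$), then $\varphi'_\mathbf{i}(\varepsilon_\ell)=\mathbf{a}_{\omega_{i_\ell}}$. -/
open Finset

variable {n : ℕ}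

lemma pair_inv (A : Fin n → Fin n → ℤ) (hA : ∀ i, A i i = 2) (a : Fin n)
    (x : QvLat n) (lam : PLat n) :
    pairQP A (sQ A a x) (sP A a lam) = pairQP A x lam := by
  have hx : ∀ j, sQ A a x j = x j - (if j = a then (∑ k, A k a * x k) else 0) := by
    intro j; simp only [sQ]; split <;> simp_all
  have h1 : ∀ j, (sP A a lam).1 j = lam.1 j - (if j = a then ((∑ k, A a k * lam.1 k) + lam.2 a) else 0) := by
    intro j; simp only [sP]; split <;> simp_all
  have h2 : (sP A a lam).2 = lam.2 := rfl
  simp only [pairQP, hx, h1, h2, sub_mul, mul_sub, Finset.sum_sub_distrib,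
    ite_mul, zero_mul, mul_ite, mul_zero, Finset.sum_ite_eq', Finset.mem_univ, if_true]
  have key : (∑ p : Fin n, ∑ b : Fin n,
      if p = a then (∑ k, A k a * x k) * A p b * lam.1 b else 0)
      = (∑ k, A k a * x k) * (∑ k, A a k * lam.1 k) := by
    rw [Finset.sum_comm, Finset.mul_sum]
    refine Finset.sum_congr rfl fun b _ => ?_
    simp only [Finset.sum_ite_eq', Finset.mem_univ, if_true]; ring
  have e2 : ∑ p, x p * A p a * ((∑ k, A a k * lam.1 k) + lam.2 a)
      = (∑ k, A k a * x k) * ((∑ k, A a k * lam.1 k) + lam.2 a) := by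
    rw [Finset.sum_mul]; exact Finset.sum_congr rfl (fun p _ => by ring)
  rw [key, e2, hA a]; ring
lemma pair_w_inv (A : Fin n → Fin n → ℤ) (hA : ∀ i, A i i = 2) (ii : ℕ → Fin n) :
    ∀ (t : ℕ) (x : QvLat n) (lam : PLat n),
      pairQP A (wQ A ii t x) (wP A ii t lam) = pairQP A x lam
  | 0, x, lam => rfl
  | (t+1), x, lam => by
    show pairQP A (wQ A ii t (sQ A (ii (t+1)) x)) (wP A ii t (sP A (ii (t+1)) lam)) = _
    rw [pair_w_inv A hA ii t, pair_inv A hA]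

lemma sP_omP (A : Fin n → Fin n → ℤ) {a j : Fin n} (h : a ≠ j) :
    sP A a (omP j) = omP j := by
  unfold sP omP
  refine Prod.ext ?_ rfl
  funext p
  simp [h]

lemma pair_coroot_omP (A : Fin n → Fin n → ℤ) {j q : Fin n} (h : j ≠ q) :
    pairQP A (coroot j) (omP q) = 0 := by
  simp [pairQP, coroot, omP, ite_mul, zero_mul, mul_ite, mul_zero,
    Finset.sum_ite_eq', Ne.symm h]

lemma wP_stable (A : Fin n → Fin n → ℤ) (ii : ℕ → Fin n) (m l : ℕ)
    (hl3 : kplus ii m l = m + 1) :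
    ∀ t, l ≤ t → t ≤ m → wP A ii t (omP (ii l)) = wP A ii l (omP (ii l)) := by
  have hne : ∀ t, l < t → t ≤ m → ii t ≠ ii l := by
    intro t h1 h2 h3
    have : kplus ii m l ≤ t := Nat.sInf_le (Or.inl ⟨h1, h2, h3⟩)
    omega
  intro t
  induction t with
  | zero =>
    intro h1 _
    obtain rfl : l = 0 := Nat.le_zero.mp h1
    rfl
  | succ t ih =>
    intro h1 h2
    rcases Nat.lt_or_ge l (t+1) with h | h
    · have : wP A ii (t+1) (omP (ii l)) = wP A ii t (sP A (ii (t+1)) (omP (ii l))) := rfl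
      rw [this, sP_omP A (hne (t+1) h h2), ih (by omega) (by omega)]
    · obtain rfl : l = t + 1 := by omega
      rfl
/-- if `ℓ⁺ = m+1` then `φ'_𝐢(ε_ℓ) = 𝐚_{ω_{i_ℓ}}`. -/
theorem phi'_eps_of_not_ex {n m : ℕ} (hm : 1 ≤ m)
    (A : Fin n → Fin n → ℤ) (d : Fin n → ℤ)
    (hA : ∀ i, A i i = 2) (hd : ∀ i, 0 < d i)
    (hsym : ∀ i j, d i * A i j = d j * A j i)
    (ii : ℕ → Fin n)
    (l : ℕ) (hl1 : 1 ≤ l) (hl2 : l ≤ m) (hl3 : kplus ii m l = m + 1) :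
    phiMap' A ii m (eps m l) = avec A ii m (omP (ii l)) := by
  have hne : ∀ t, l < t → t ≤ m → ii t ≠ ii l := by
    intro t h1 h2 h3
    have : kplus ii m l ≤ t := Nat.sInf_le (Or.inl ⟨h1, h2, h3⟩)
    omega
  have hstab := wP_stable A ii m l hl3
  have hsum : phiMap' A ii m (eps m l) = phiE' A ii m l := by
    unfold phiMap'
    rw [Finset.sum_eq_single (⟨l-1, by omega⟩ : Fin m)]
    · have h1 : (l-1)+1 = l := by omega
      simp [eps, h1]
    · intro k _ hk
      have : ¬ ((k:ℕ)+1 = l) := by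
        intro h; exact hk (Fin.ext (by simp; omega))
      simp [eps, this]
    · intro h; exact absurd (Finset.mem_univ _) h
  rw [hsum]
  funext p
  have hcol : phiE' A ii m l p = -(if (p:ℕ)+1 ≤ l then
      pairQP A (wQ A ii ((p:ℕ)+1) (coroot (ii ((p:ℕ)+1)))) (wP A ii l (omP (ii l)))
      else 0) := by
    simp only [phiE', Pi.neg_apply, Finset.sum_apply, Pi.smul_apply, smul_eq_mul]
    congr 1
    rw [Finset.sum_eq_single p]
    · simp [eps]
    · intro k _ hk
      have : ¬ ((p:ℕ)+1 = (k:ℕ)+1) := by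
        intro h; exact hk (Fin.ext (by omega))
      simp [eps, this]
      intro h; exact absurd (Fin.ext h.symm) hk
    · intro h; exact absurd (Finset.mem_univ _) h
  rw [hcol]
  show _ = avec A ii m (omP (ii l)) p
  unfold avec
  have hp : (p:ℕ) < m := p.isLt
  by_cases h : (p:ℕ)+1 ≤ l
  · rw [if_pos h, hstab m hl2 le_rfl]
  · rw [if_neg h]
    rw [hstab m hl2 le_rfl, ← hstab ((p:ℕ)+1) (by omega) (by omega)]
    have hne' : ii ((p:ℕ)+1) ≠ ii l := hne ((p:ℕ)+1) (by omega) (by omega)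
    rw [pair_w_inv A hA ii ((p:ℕ)+1), pair_coroot_omP A hne']
end
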